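/- arXiv:0902.2479 — 4 statements merged into one kernel-verified Lean document; each statement's English description precedes it below -/
import Mathlib

section
/- Let ν be a measure on ℝ with density ρ(y) ≤ M/|y|^{1+α} on |y| ≤ 1 with α ∈ [0,2), and ∫_{|y|>1}|y| ν(dy) < ∞. Suppose φ : ℝ → ℝ is Lipschitz with constant L on ℝ, and on an interval D¹ (the 1-neighborhood of a bounded open interval D) the derivative φ' exists and is β−1 Hölder continuous with constant H, for some β ∈ (α, 2) with β > 1. Then there is a constant C depending on M, α, β, L, H, ν such that sup_{x ∈ D} |Iφ(x)| ≤ C, where Iφ(x) = ∫_ℝ [φ(x+y) − φ(x) − y φ'(x) 1_{|y|≤1}] ν(dy). -/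
open MeasureTheory Set
open scoped ENNReal NNReal

lemma aux_abs_rpow_integrable (s : ℝ) (hs : -1 < s) :
    IntegrableOn (fun y : ℝ => |y| ^ s) (Icc (-1) 1) volume := by
  have h1 : IntervalIntegrable (fun y : ℝ => |y| ^ s) volume 0 1 := by
    refine (intervalIntegral.intervalIntegrable_rpow' hs (a := 0) (b := 1)).congr ?_
    intro y hy
    rw [uIoc_of_le (by norm_num : (0:ℝ) ≤ 1)] at hy
    simp [abs_of_pos hy.1]
  have h2 : IntervalIntegrable (fun y : ℝ => |y| ^ s) volume (-1) 0 := by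
    have := (IntervalIntegrable.iff_comp_neg (f := fun y : ℝ => |y| ^ s) (a := 0) (b := 1)).1 h1
    simpa using this.symm
  have e1 : IntegrableOn (fun y : ℝ => |y| ^ s) (Icc 0 1) volume := by
    rw [integrableOn_Icc_iff_integrableOn_Ioc]
    exact (intervalIntegrable_iff_integrableOn_Ioc_of_le (by norm_num)).1 h1
  have e2 : IntegrableOn (fun y : ℝ => |y| ^ s) (Icc (-1) 0) volume := by
    rw [integrableOn_Icc_iff_integrableOn_Ioc]
    exact (intervalIntegrable_iff_integrableOn_Ioc_of_le (by norm_num)).1 h2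
  have : Icc (-1:ℝ) 1 = Icc (-1) 0 ∪ Icc 0 1 :=
    (Icc_union_Icc_eq_Icc (by norm_num) (by norm_num)).symm
  rw [this]
  exact e2.union e1

lemma taylor_aux (β H l r : ℝ) (hβ1 : 1 < β) (hH0 : 0 ≤ H) (φ φ' : ℝ → ℝ)
    (hd : ∀ x ∈ Ioo (l - 1) (r + 1), HasDerivAt φ (φ' x) x)
    (hH : ∀ x₁ ∈ Ioo (l - 1) (r + 1), ∀ x₂ ∈ Ioo (l - 1) (r + 1),
      |φ' x₁ - φ' x₂| ≤ H * |x₁ - x₂| ^ (β - 1))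
    (x : ℝ) (hx : x ∈ Ioo l r) (y : ℝ) (hy : |y| ≤ 1) :
    |φ (x + y) - φ x - y * φ' x| ≤ H * |y| ^ β := by
  obtain ⟨hy1, hy2⟩ := abs_le.1 hy
  set s : Set ℝ := Icc (min x (x + y)) (max x (x + y)) with hs
  have hsub : s ⊆ Ioo (l - 1) (r + 1) := by
    intro t ht
    obtain ⟨ht1, ht2⟩ := ht
    constructor
    · have : min x (x + y) ≥ x - 1 := le_min (by linarith [hx.1]) (by linarith)
      linarith [hx.1]
    · have : max x (x + y) ≤ x + 1 := max_le (by linarith) (by linarith)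
      linarith [hx.2]
  have hdist : ∀ t ∈ s, |t - x| ≤ |y| := by
    intro t ht
    obtain ⟨ht1, ht2⟩ := ht
    have h1 : x - |y| ≤ min x (x + y) :=
      le_min (by linarith [abs_nonneg y]) (by linarith [neg_abs_le y])
    have h2 : max x (x + y) ≤ x + |y| :=
      max_le (by linarith [abs_nonneg y]) (by linarith [le_abs_self y])
    rw [abs_le]; constructor <;> linarith
  have hderiv : ∀ t ∈ s, HasDerivWithinAt (fun u => φ u - u * φ' x) (φ' t - φ' x) s t := by
    intro t ht
    have := ((hd t (hsub ht)).sub (hasDerivAt_mul_const (x := t) (φ' x))).hasDerivWithinAt (s := s)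
    exact this
  have hbound : ∀ t ∈ s, ‖φ' t - φ' x‖ ≤ H * |y| ^ (β - 1) := by
    intro t ht
    have h1 := hH t (hsub ht) x (hsub ⟨min_le_left _ _, le_max_left _ _⟩)
    refine le_trans h1 (mul_le_mul_of_nonneg_left ?_ hH0)
    exact Real.rpow_le_rpow (abs_nonneg _) (hdist t ht) (by linarith)
  have key := Convex.norm_image_sub_le_of_norm_hasDerivWithin_le hderiv hbound
    (convex_Icc _ _) (⟨min_le_left _ _, le_max_left _ _⟩ : x ∈ s)
    (⟨min_le_right _ _, le_max_right _ _⟩ : x + y ∈ s)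
  have heq : (φ (x + y) - (x + y) * φ' x) - (φ x - x * φ' x) = φ (x + y) - φ x - y * φ' x := by
    ring
  rw [Real.norm_eq_abs, heq] at key
  refine key.trans ?_
  rw [show x + y - x = y by ring, Real.norm_eq_abs]
  rcases eq_or_ne y 0 with rfl | hy0
  · simp [Real.zero_rpow (by linarith : β ≠ 0)]
  · have : |y| ^ (β - 1) * |y| = |y| ^ β := by
      rw [← Real.rpow_add_one (abs_ne_zero.2 hy0), sub_add_cancel]
    rw [mul_assoc, this]

theorem stmt_1
    (ν : Measure ℝ) (ρ : ℝ → ℝ≥0∞) (M α β L H l r : ℝ)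
    (hν : ν = MeasureTheory.volume.withDensity ρ)
    (hM : 0 < M) (hα0 : 0 ≤ α) (hα2 : α < 2)
    (hρ : ∀ y : ℝ, y ≠ 0 → |y| ≤ 1 → ρ y ≤ ENNReal.ofReal (M / |y| ^ (1 + α)))
    (hmom : IntegrableOn (fun y => |y|) {y : ℝ | 1 < |y|} ν)
    (hlr : l < r) (hβα : α < β) (hβ2 : β < 2) (hβ1 : 1 < β)
    (φ φ' : ℝ → ℝ)
    (hL : ∀ x₁ x₂ : ℝ, |φ x₁ - φ x₂| ≤ L * |x₁ - x₂|)
    (hd : ∀ x ∈ Ioo (l - 1) (r + 1), HasDerivAt φ (φ' x) x)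
    (hH : ∀ x₁ ∈ Ioo (l - 1) (r + 1), ∀ x₂ ∈ Ioo (l - 1) (r + 1),
      |φ' x₁ - φ' x₂| ≤ H * |x₁ - x₂| ^ (β - 1)) :
    ∃ C : ℝ, ∀ x ∈ Ioo l r,
      Integrable (fun y => φ (x + y) - φ x - (if |y| ≤ 1 then y * φ' x else 0)) ν ∧
      |∫ y, (φ (x + y) - φ x - (if |y| ≤ 1 then y * φ' x else 0)) ∂ν| ≤ C := by
  -- nonnegativity of constants
  have hL0 : 0 ≤ L := by
    have h := hL 0 1
    have h2 : (0:ℝ) ≤ L * 1 := le_trans (abs_nonneg _) (by simpa using h)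
    linarith
  have hH0 : 0 ≤ H := by
    have hl : l ∈ Ioo (l - 1) (r + 1) := ⟨by linarith, by linarith⟩
    have hr : r ∈ Ioo (l - 1) (r + 1) := ⟨by linarith, by linarith⟩
    have h := hH l hl r hr
    have hpos : (0:ℝ) < |l - r| ^ (β - 1) :=
      Real.rpow_pos_of_pos (abs_pos.2 (by linarith)) _
    nlinarith [abs_nonneg (φ' l - φ' r)]
  set A : Set ℝ := {y : ℝ | |y| ≤ 1} with hA
  have hAm : MeasurableSet A := measurableSet_le measurable_abs measurable_const
  set g : ℝ → ℝ := fun y => if |y| ≤ 1 then H * |y| ^ β else L * |y| with hg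
  have hgm : Measurable g := by
    refine Measurable.ite hAm ?_ ?_
    · fun_prop
    · fun_prop
  -- integrability of g near 0
  have hginta : IntegrableOn g A ν := by
    set ρ2 : ℝ → ℝ≥0∞ := fun y => ENNReal.ofReal (M / |y| ^ (1 + α)) with hρ2
    have hρ2m : Measurable ρ2 := by fun_prop
    have hle : ν.restrict A ≤ (volume.withDensity ρ2).restrict A := by
      rw [Measure.le_iff]
      intro s hs
      rw [Measure.restrict_apply hs, Measure.restrict_apply hs, hν,
        withDensity_apply _ (hs.inter hAm), withDensity_apply _ (hs.inter hAm)]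
      refine lintegral_mono_ae ?_
      have h0 : ∀ᵐ y ∂(volume.restrict (s ∩ A)), y ≠ (0:ℝ) := by
        refine ae_restrict_of_ae ?_
        refine ae_iff.2 ?_
        have : {y : ℝ | ¬ y ≠ 0} = {0} := by ext y; simp
        rw [this]
        exact measure_singleton 0
      filter_upwards [h0, ae_restrict_mem (hs.inter hAm)] with y hy0 hymem
      exact hρ y hy0 hymem.2
    have hmu : Integrable g ((volume.withDensity ρ2).restrict A) := by
      rw [restrict_withDensity hAm]
      rw [integrable_withDensity_iff hρ2m (ae_of_all _ fun y => ENNReal.ofReal_lt_top)]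
      have hint0 : IntegrableOn (fun y : ℝ => |y| ^ (β - (1 + α))) (Icc (-1) 1) volume :=
        aux_abs_rpow_integrable _ (by linarith)
      have hint1 : IntegrableOn (fun y : ℝ => (H * M) * |y| ^ (β - (1 + α)))
          (Icc (-1) 1) volume := hint0.const_mul (H * M)
      have hint : IntegrableOn (fun y : ℝ => (H * M) * |y| ^ (β - (1 + α))) A volume := by
        refine hint1.mono_set ?_
        intro y hy
        exact abs_le.1 hy
      refine Integrable.mono' hint ?_ ?_
      · exact ((hgm.mul hρ2m.ennreal_toReal).aestronglyMeasurable).restrict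
      · have h0 : ∀ᵐ y ∂(volume.restrict A), y ≠ (0:ℝ) := by
          refine ae_restrict_of_ae ?_
          refine ae_iff.2 ?_
          have : {y : ℝ | ¬ y ≠ 0} = {0} := by ext y; simp
          rw [this]
          exact measure_singleton 0
        filter_upwards [h0, ae_restrict_mem hAm] with y hy0 hymem
        have habs : (0:ℝ) < |y| := abs_pos.2 hy0
        have hgy : g y = H * |y| ^ β := if_pos hymem
        have hρy : (ρ2 y).toReal = M / |y| ^ (1 + α) := by
          rw [hρ2]
          exact ENNReal.toReal_ofReal
            (div_nonneg hM.le (Real.rpow_nonneg (abs_nonneg _) _))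
        rw [Real.norm_eq_abs, hgy, hρy, abs_of_nonneg]
        · rw [div_eq_mul_inv, ← Real.rpow_neg (abs_nonneg y),
            show H * |y| ^ β * (M * |y| ^ (-(1 + α))) =
              (H * M) * (|y| ^ β * |y| ^ (-(1 + α))) by ring,
            ← Real.rpow_add habs]
          ring_nf
          exact le_of_eq (by ring_nf)
        · exact mul_nonneg (mul_nonneg hH0 (Real.rpow_nonneg (abs_nonneg _) _))
            (div_nonneg hM.le (Real.rpow_nonneg (abs_nonneg _) _))
    exact hmu.mono_measure hle
  -- integrability of g away from 0
  have hgintb : IntegrableOn g Aᶜ ν := by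
    have hAc : Aᶜ = {y : ℝ | 1 < |y|} := by ext y; simp [hA, not_le]
    rw [hAc]
    refine Integrable.mono' (hmom.const_mul L) (hgm.aestronglyMeasurable.restrict) ?_
    have hm : MeasurableSet {y : ℝ | 1 < |y|} := measurableSet_lt measurable_const measurable_abs
    filter_upwards [ae_restrict_mem hm] with y hy
    have hny : ¬ |y| ≤ 1 := not_le.2 hy
    rw [Real.norm_eq_abs, hg]
    simp only [if_neg hny]
    rw [abs_of_nonneg (mul_nonneg hL0 (abs_nonneg y))]
  have hgint : Integrable g ν := by
    rw [← integrableOn_univ, ← union_compl_self A]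
    exact hginta.union hgintb
  -- conclusion
  refine ⟨∫ y, g y ∂ν, fun x hx => ?_⟩
  have hbd : ∀ y : ℝ,
      ‖φ (x + y) - φ x - (if |y| ≤ 1 then y * φ' x else 0)‖ ≤ g y := by
    intro y
    rw [Real.norm_eq_abs]
    by_cases hy : |y| ≤ 1
    · have hgy : g y = H * |y| ^ β := if_pos hy
      rw [if_pos hy, hgy]
      exact taylor_aux β H l r hβ1 hH0 φ φ' hd hH x hx y hy
    · have hgy : g y = L * |y| := if_neg hy
      rw [if_neg hy, hgy, sub_zero]
      have := hL (x + y) x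
      rwa [show x + y - x = y by ring] at this
  have hφc : Continuous φ := by
    have hlip : LipschitzWith (Real.toNNReal L) φ := by
      refine LipschitzWith.of_dist_le_mul fun a b => ?_
      rw [Real.dist_eq, Real.dist_eq]
      exact (hL a b).trans
        (mul_le_mul_of_nonneg_right (Real.le_coe_toNNReal L) (abs_nonneg _))
    exact hlip.continuous
  have hFm : AEStronglyMeasurable
      (fun y => φ (x + y) - φ x - (if |y| ≤ 1 then y * φ' x else 0)) ν := by
    refine Measurable.aestronglyMeasurable ?_
    refine Measurable.sub (Measurable.sub ?_ measurable_const) ?_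
    · exact (hφc.comp (continuous_const.add continuous_id)).measurable
    · exact Measurable.ite hAm (measurable_id.mul_const _) measurable_const
  have hFint : Integrable
      (fun y => φ (x + y) - φ x - (if |y| ≤ 1 then y * φ' x else 0)) ν :=
    hgint.mono' hFm (ae_of_all _ hbd)
  refine ⟨hFint, ?_⟩
  calc |∫ y, (φ (x + y) - φ x - (if |y| ≤ 1 then y * φ' x else 0)) ∂ν|
      ≤ ∫ y, ‖φ (x + y) - φ x - (if |y| ≤ 1 then y * φ' x else 0)‖ ∂ν := by
        rw [← Real.norm_eq_abs]
        exact norm_integral_le_integral_norm _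
    _ ≤ ∫ y, g y ∂ν := integral_mono hFint.norm hgint hbd
end

section
/- Let ν have density ρ with ρ(y) ≤ M/|y|^{1+α} on |y| ≤ 1, α ∈ [1,2), and ∫_{|y|>1}|y| ν(dy) < ∞. Let φ : ℝ → ℝ be Lipschitz with constant L on ℝ, and on the 1-neighborhood D¹ of a bounded interval D let φ be C¹ with φ' Hölder continuous of exponent β−1 for some β ∈ (α, 2), with Hölder seminorm at most H. Then Iφ is Hölder continuous of exponent (β−α)/2 on D: there is a constant C depending on D, α, β such that |Iφ(x₁) − Iφ(x₂)| ≤ C (L + H) |x₁ − x₂|^{(β−α)/2} for all x₁, x₂ ∈ D. -/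
open MeasureTheory Set
open scoped ENNReal NNReal

section Helpers

lemma shell_set_eq {a b : ℝ} (h0 : 0 ≤ a) :
    {y : ℝ | a < |y| ∧ |y| ≤ b} = Ioc a b ∪ Ico (-b) (-a) := by
  ext y
  simp only [mem_setOf_eq, mem_union, mem_Ioc, mem_Ico]
  rcases le_or_gt 0 y with hy | hy
  · rw [abs_of_nonneg hy]
    constructor
    · rintro ⟨h1, h2⟩; exact Or.inl ⟨h1, h2⟩
    · rintro (⟨h1, h2⟩ | ⟨h1, h2⟩)
      · exact ⟨h1, h2⟩
      · exact absurd h2 (by push_neg; linarith)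
  · rw [abs_of_neg hy]
    constructor
    · rintro ⟨h1, h2⟩; exact Or.inr ⟨by linarith, by linarith⟩
    · rintro (⟨h1, h2⟩ | ⟨h1, h2⟩)
      · linarith
      · exact ⟨by linarith, by linarith⟩

lemma shell_meas {a b : ℝ} : MeasurableSet {y : ℝ | a < |y| ∧ |y| ≤ b} := by
  have : {y : ℝ | a < |y| ∧ |y| ≤ b} = abs ⁻¹' Ioc a b := rfl
  rw [this]
  exact measurableSet_Ioc.preimage measurable_abs

lemma shell_lintegral {a b q : ℝ} (h0 : 0 ≤ a)
    (hint : IntegrableOn (fun y => y ^ q) (Ioc a b)) :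
    ∫⁻ y in {y : ℝ | a < |y| ∧ |y| ≤ b}, ENNReal.ofReal (|y| ^ q)
      ≤ ENNReal.ofReal (2 * ∫ y in Ioc a b, y ^ q) := by
  have hnn : 0 ≤ᵐ[volume.restrict (Ioc a b)] fun y : ℝ => y ^ q := by
    filter_upwards [ae_restrict_mem measurableSet_Ioc] with y hy
    exact Real.rpow_nonneg (le_of_lt (lt_of_le_of_lt h0 hy.1)) q
  have key : ∫⁻ y in Ioc a b, ENNReal.ofReal (|y| ^ q) ∂volume
      = ENNReal.ofReal (∫ y in Ioc a b, y ^ q) := by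
    rw [ofReal_integral_eq_lintegral_ofReal hint hnn]
    refine setLIntegral_congr_fun measurableSet_Ioc (fun y hy => ?_)
    rw [abs_of_pos (lt_of_le_of_lt h0 hy.1)]
  have neg_piece : ∫⁻ y in Ico (-b) (-a), ENNReal.ofReal (|y| ^ q) ∂volume
      = ∫⁻ y in Ioc a b, ENNReal.ofReal (|y| ^ q) ∂volume := by
    have hpre : (Neg.neg : ℝ → ℝ) ⁻¹' Ioc a b = Ico (-b) (-a) := by
      ext y; simp only [mem_preimage, mem_Ioc, mem_Ico]; constructor <;> intro h <;>
        exact ⟨by linarith [h.1, h.2], by linarith [h.1, h.2]⟩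
    calc ∫⁻ y in Ico (-b) (-a), ENNReal.ofReal (|y| ^ q) ∂volume
        = ∫⁻ y in (Neg.neg : ℝ → ℝ) ⁻¹' Ioc a b, ENNReal.ofReal (|(-y)| ^ q) ∂volume := by
          rw [hpre]; exact setLIntegral_congr_fun (measurableSet_Ico) (fun y _ => by simp only [abs_neg])
      _ = ∫⁻ y in Ioc a b, ENNReal.ofReal (|y| ^ q) ∂volume :=
          (Measure.measurePreserving_neg volume).setLIntegral_comp_preimage_emb
            (Homeomorph.neg ℝ).measurableEmbedding (fun y => ENNReal.ofReal (|y| ^ q)) _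
  calc ∫⁻ y in {y : ℝ | a < |y| ∧ |y| ≤ b}, ENNReal.ofReal (|y| ^ q)
      ≤ ∫⁻ y in Ioc a b, ENNReal.ofReal (|y| ^ q) ∂volume
        + ∫⁻ y in Ico (-b) (-a), ENNReal.ofReal (|y| ^ q) ∂volume := by
        rw [shell_set_eq h0]; exact lintegral_union_le _ _ _
    _ = ENNReal.ofReal (2 * ∫ y in Ioc a b, y ^ q) := by
        have h0i : 0 ≤ ∫ y in Ioc a b, y ^ q := integral_nonneg_of_ae hnn
        rw [neg_piece, key, ← ENNReal.ofReal_add h0i h0i]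
        congr 1
        ring

lemma nu_shell {ρ : ℝ → ℝ≥0∞} {M α : ℝ} (hM : 0 ≤ M)
    (hρ : ∀ y : ℝ, y ≠ 0 → |y| ≤ 1 → ρ y ≤ ENNReal.ofReal (M / |y| ^ (1 + α)))
    {a b c e : ℝ} (h0 : 0 ≤ a) (hb1 : b ≤ 1) (hc : 0 ≤ c)
    (hint : IntegrableOn (fun y => y ^ (e - (1 + α))) (Ioc a b)) :
    ∫⁻ y in {y : ℝ | a < |y| ∧ |y| ≤ b}, ENNReal.ofReal (c * |y| ^ e)
        ∂(MeasureTheory.volume.withDensity ρ)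
      ≤ ENNReal.ofReal (c * M * (2 * ∫ y in Ioc a b, y ^ (e - (1 + α)))) := by
  set A := {y : ℝ | a < |y| ∧ |y| ≤ b} with hA
  have hAm : MeasurableSet A := shell_meas
  set d : ℝ → ℝ≥0∞ := fun y => ENNReal.ofReal (M * |y| ^ (-(1 + α))) with hd
  have hdm : Measurable d := by
    apply ENNReal.measurable_ofReal.comp; measurability
  have hfm : Measurable fun y : ℝ => ENNReal.ofReal (c * |y| ^ e) := by
    apply ENNReal.measurable_ofReal.comp; measurability
  have hρd : ∀ y ∈ A, ρ y ≤ d y := by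
    intro y hy
    obtain ⟨hy1, hy2⟩ := hy
    have hyne : y ≠ 0 := by
      intro h; rw [h, abs_zero] at hy1; exact absurd hy1 (not_lt.2 h0)
    have := hρ y hyne (le_trans hy2 hb1)
    rwa [div_eq_mul_inv, ← Real.rpow_neg (abs_nonneg y)] at this
  have step1 : ∫⁻ y in A, ENNReal.ofReal (c * |y| ^ e) ∂(MeasureTheory.volume.withDensity ρ)
      ≤ ∫⁻ y in A, ENNReal.ofReal (c * |y| ^ e) ∂(MeasureTheory.volume.withDensity d) := by
    rw [restrict_withDensity hAm, restrict_withDensity hAm]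
    refine lintegral_mono' (withDensity_mono ?_) le_rfl
    filter_upwards [ae_restrict_mem hAm] with y hy
    exact hρd y hy
  have step2 : ∫⁻ y in A, ENNReal.ofReal (c * |y| ^ e) ∂(MeasureTheory.volume.withDensity d)
      = ∫⁻ y in A, ENNReal.ofReal (c * M) * ENNReal.ofReal (|y| ^ (e - (1 + α))) := by
    rw [setLIntegral_withDensity_eq_setLIntegral_mul _ hdm hfm hAm]
    refine setLIntegral_congr_fun hAm (fun y hy => ?_)
    obtain ⟨hy1, hy2⟩ := hy
    have hypos : 0 < |y| := lt_of_le_of_lt h0 hy1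
    simp only [Pi.mul_apply, hd]
    rw [← ENNReal.ofReal_mul (by positivity), ← ENNReal.ofReal_mul (by positivity)]
    congr 1
    rw [show e - (1 + α) = -(1 + α) + e by ring, Real.rpow_add hypos]
    ring
  have step3 : ∫⁻ y in A, ENNReal.ofReal (c * M) * ENNReal.ofReal (|y| ^ (e - (1 + α)))
      ≤ ENNReal.ofReal (c * M) * ENNReal.ofReal (2 * ∫ y in Ioc a b, y ^ (e - (1 + α))) := by
    rw [lintegral_const_mul' _ _ ENNReal.ofReal_ne_top]
    exact mul_le_mul_right (shell_lintegral h0 hint) _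
  calc _ ≤ _ := step1
    _ = _ := step2
    _ ≤ _ := step3
    _ ≤ _ := by rw [← ENNReal.ofReal_mul (by positivity), mul_assoc]

lemma aux_mvt {ψ ψ' : ℝ → ℝ} {K y : ℝ}
    (hd : ∀ t ∈ uIcc (0:ℝ) y, HasDerivAt ψ (ψ' t) t)
    (hb : ∀ t ∈ uIcc (0:ℝ) y, |ψ' t| ≤ K) :
    |ψ y - ψ 0| ≤ K * |y| := by
  have h := Convex.norm_image_sub_le_of_norm_hasDerivWithin_le
    (f := ψ) (f' := ψ') (s := uIcc (0:ℝ) y)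
    (fun t ht => (hd t ht).hasDerivWithinAt) hb (convex_uIcc 0 y)
    left_mem_uIcc right_mem_uIcc
  simpa [Real.norm_eq_abs] using h

lemma abs_le_of_mem_uIcc {t y : ℝ} (ht : t ∈ uIcc (0:ℝ) y) : |t| ≤ |y| := by
  rcases le_total 0 y with hy | hy
  · rw [uIcc_of_le hy] at ht
    rw [abs_of_nonneg ht.1, abs_of_nonneg hy]; exact ht.2
  · rw [uIcc_of_ge hy] at ht
    rw [abs_of_nonpos ht.2, abs_of_nonpos hy]; linarith [ht.1]

lemma taylor_bound {φ φ' : ℝ → ℝ} {l r β H : ℝ} (hβ : 1 ≤ β) (hH0 : 0 ≤ H)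
    (hd : ∀ x ∈ Ioo (l - 1) (r + 1), HasDerivAt φ (φ' x) x)
    (hH : ∀ x₁ ∈ Ioo (l - 1) (r + 1), ∀ x₂ ∈ Ioo (l - 1) (r + 1),
      |φ' x₁ - φ' x₂| ≤ H * |x₁ - x₂| ^ (β - 1))
    {x y : ℝ} (hx : x ∈ Ioo l r) (hy : |y| ≤ 1) :
    |φ (x + y) - φ x - y * φ' x| ≤ H * |y| ^ β := by
  have hmem : ∀ t ∈ uIcc (0:ℝ) y, x + t ∈ Ioo (l - 1) (r + 1) := by
    intro t ht
    have := abs_le_of_mem_uIcc ht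
    have h1 := abs_le.1 (this.trans hy)
    exact ⟨by linarith [hx.1], by linarith [hx.2]⟩
  have hxm : x ∈ Ioo (l - 1) (r + 1) := ⟨by linarith [hx.1], by linarith [hx.2]⟩
  set ψ : ℝ → ℝ := fun t => φ (x + t) - t * φ' x with hψ
  have hder : ∀ t ∈ uIcc (0:ℝ) y, HasDerivAt ψ (φ' (x + t) - φ' x) t := by
    intro t ht
    have h1 : HasDerivAt (fun t : ℝ => φ (x + t)) (φ' (x + t) * 1) t :=
      (hd _ (hmem t ht)).comp t ((hasDerivAt_id t).const_add x)
    have h2 : HasDerivAt (fun t : ℝ => t * φ' x) (1 * φ' x) t :=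
      (hasDerivAt_id t).mul_const (φ' x)
    have h3 := h1.sub h2
    simp only [mul_one, one_mul] at h3
    exact h3
  have hbound : ∀ t ∈ uIcc (0:ℝ) y, |φ' (x + t) - φ' x| ≤ H * |y| ^ (β - 1) := by
    intro t ht
    refine (hH _ (hmem t ht) _ hxm).trans ?_
    have : |x + t - x| = |t| := by congr 1; ring
    rw [this]
    exact mul_le_mul_of_nonneg_left
      (Real.rpow_le_rpow (abs_nonneg t) (abs_le_of_mem_uIcc ht) (by linarith)) hH0
  have := aux_mvt hder hbound
  have hψ0 : ψ 0 = φ x := by simp [hψ]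
  have hψy : ψ y = φ (x + y) - y * φ' x := rfl
  rw [hψ0, hψy] at this
  have heq : H * |y| ^ (β - 1) * |y| ≤ H * |y| ^ β := by
    rcases eq_or_ne y 0 with h | h
    · simp only [h, abs_zero]
      rw [Real.zero_rpow (by linarith : β ≠ 0)]
      have : (0:ℝ) ^ (β - 1) * 0 = 0 := by ring
      rw [mul_assoc, this, mul_zero]
    · have heq2 : |y| ^ (β - 1) * |y| = |y| ^ β := by
        conv_rhs => rw [show β = β - 1 + 1 by ring]
        rw [Real.rpow_add (abs_pos.2 h), Real.rpow_one]
      rw [mul_assoc, heq2]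
  calc |φ (x + y) - φ x - y * φ' x| = |φ (x + y) - y * φ' x - φ x| := by ring_nf
    _ ≤ H * |y| ^ (β - 1) * |y| := this
    _ ≤ H * |y| ^ β := heq

lemma diff_mvt {φ φ' : ℝ → ℝ} {l r β H : ℝ}
    (hd : ∀ x ∈ Ioo (l - 1) (r + 1), HasDerivAt φ (φ' x) x)
    (hH : ∀ x₁ ∈ Ioo (l - 1) (r + 1), ∀ x₂ ∈ Ioo (l - 1) (r + 1),
      |φ' x₁ - φ' x₂| ≤ H * |x₁ - x₂| ^ (β - 1))
    {x₁ x₂ y : ℝ} (hx₁ : x₁ ∈ Ioo l r) (hx₂ : x₂ ∈ Ioo l r) (hy : |y| ≤ 1) :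
    |φ (x₁ + y) - φ (x₂ + y) - (φ x₁ - φ x₂)| ≤ H * |x₁ - x₂| ^ (β - 1) * |y| := by
  have hmem : ∀ (x : ℝ), x ∈ Ioo l r → ∀ t ∈ uIcc (0:ℝ) y, x + t ∈ Ioo (l - 1) (r + 1) := by
    intro x hx t ht
    have h1 := abs_le.1 ((abs_le_of_mem_uIcc ht).trans hy)
    exact ⟨by linarith [hx.1], by linarith [hx.2]⟩
  set ψ : ℝ → ℝ := fun t => φ (x₁ + t) - φ (x₂ + t) with hψ
  have hder : ∀ t ∈ uIcc (0:ℝ) y, HasDerivAt ψ (φ' (x₁ + t) - φ' (x₂ + t)) t := by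
    intro t ht
    have h1 : HasDerivAt (fun t : ℝ => φ (x₁ + t)) (φ' (x₁ + t) * 1) t :=
      (hd _ (hmem x₁ hx₁ t ht)).comp t ((hasDerivAt_id t).const_add x₁)
    have h2 : HasDerivAt (fun t : ℝ => φ (x₂ + t)) (φ' (x₂ + t) * 1) t :=
      (hd _ (hmem x₂ hx₂ t ht)).comp t ((hasDerivAt_id t).const_add x₂)
    have h3 := h1.sub h2
    simp only [mul_one, one_mul] at h3
    exact h3
  have hbound : ∀ t ∈ uIcc (0:ℝ) y, |φ' (x₁ + t) - φ' (x₂ + t)| ≤ H * |x₁ - x₂| ^ (β - 1) := by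
    intro t ht
    have := hH _ (hmem x₁ hx₁ t ht) _ (hmem x₂ hx₂ t ht)
    have heq : |x₁ + t - (x₂ + t)| = |x₁ - x₂| := by congr 1; ring
    rwa [heq] at this
  have := aux_mvt hder hbound
  have hψ0 : ψ 0 = φ x₁ - φ x₂ := by simp [hψ]
  have hψy : ψ y = φ (x₁ + y) - φ (x₂ + y) := rfl
  rw [hψ0, hψy] at this
  exact this

lemma B_meas : MeasurableSet {y : ℝ | |y| ≤ 1} := measurable_abs measurableSet_Iic

lemma nu_null_zero (ρ : ℝ → ℝ≥0∞) : (MeasureTheory.volume.withDensity ρ) {(0:ℝ)} = 0 := by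
  rw [withDensity_apply _ (measurableSet_singleton 0)]
  rw [Measure.restrict_eq_zero.2 (by simp)]
  exact lintegral_zero_measure _

lemma ball_subset (b : ℝ) : {y : ℝ | |y| ≤ b} ⊆ {y : ℝ | 0 < |y| ∧ |y| ≤ b} ∪ {(0:ℝ)} := by
  intro y hy
  rcases eq_or_ne y 0 with h | h
  · exact Or.inr (by simp [h])
  · exact Or.inl ⟨abs_pos.2 h, hy⟩

lemma lintegral_ball_le {ρ : ℝ → ℝ≥0∞} (f : ℝ → ℝ≥0∞) {b : ℝ} :
    ∫⁻ y in {y : ℝ | |y| ≤ b}, f y ∂(MeasureTheory.volume.withDensity ρ)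
      ≤ ∫⁻ y in {y : ℝ | 0 < |y| ∧ |y| ≤ b}, f y ∂(MeasureTheory.volume.withDensity ρ) := by
  refine le_trans (lintegral_mono_set (ball_subset b)) ?_
  refine le_trans (lintegral_union_le _ _ _) ?_
  have : ∫⁻ y in {(0:ℝ)}, f y ∂(MeasureTheory.volume.withDensity ρ) = 0 :=
    setLIntegral_measure_zero _ _ (nu_null_zero ρ)
  rw [this, add_zero]

lemma integrable_g {ρ : ℝ → ℝ≥0∞} {M α β L H l r : ℝ} {φ φ' : ℝ → ℝ}
    (hM : 0 < M) (hα1 : 1 ≤ α) (hβα : α < β) (hβ2 : β < 2)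
    (hρ : ∀ y : ℝ, y ≠ 0 → |y| ≤ 1 → ρ y ≤ ENNReal.ofReal (M / |y| ^ (1 + α)))
    (hmom : IntegrableOn (fun y => |y|) {y : ℝ | 1 < |y|} (MeasureTheory.volume.withDensity ρ))
    (hφc : Continuous φ)
    (hL : ∀ x₁ x₂ : ℝ, |φ x₁ - φ x₂| ≤ L * |x₁ - x₂|)
    (hd : ∀ x ∈ Ioo (l - 1) (r + 1), HasDerivAt φ (φ' x) x)
    (hH : ∀ x₁ ∈ Ioo (l - 1) (r + 1), ∀ x₂ ∈ Ioo (l - 1) (r + 1),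
      |φ' x₁ - φ' x₂| ≤ H * |x₁ - x₂| ^ (β - 1))
    (hH0 : 0 ≤ H) {x : ℝ} (hx : x ∈ Ioo l r) :
    Integrable (fun y => φ (x + y) - φ x - if |y| ≤ 1 then y * φ' x else 0)
      (MeasureTheory.volume.withDensity ρ) := by
  set ν := MeasureTheory.volume.withDensity ρ
  have hmeas : Measurable fun y : ℝ => φ (x + y) - φ x - if |y| ≤ 1 then y * φ' x else 0 := by
    refine Measurable.sub (Measurable.sub ?_ measurable_const) ?_
    · exact (hφc.comp (continuous_const.add continuous_id)).measurable
    · exact Measurable.ite B_meas (measurable_id.mul_const _) measurable_const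
  refine ⟨hmeas.aestronglyMeasurable, ?_⟩
  rw [hasFiniteIntegral_iff_norm]
  have hsplit := lintegral_add_compl
    (fun y => ENNReal.ofReal ‖φ (x + y) - φ x - if |y| ≤ 1 then y * φ' x else 0‖)
    (μ := ν) B_meas
  rw [← hsplit]
  have hcompl : {y : ℝ | |y| ≤ 1}ᶜ = {y : ℝ | 1 < |y|} := by
    ext y; simp [not_le]
  have hball : ∫⁻ y in {y : ℝ | |y| ≤ 1},
      ENNReal.ofReal ‖φ (x + y) - φ x - if |y| ≤ 1 then y * φ' x else 0‖ ∂ν < ⊤ := by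
    have hb1 : ∫⁻ y in {y : ℝ | |y| ≤ 1},
        ENNReal.ofReal ‖φ (x + y) - φ x - if |y| ≤ 1 then y * φ' x else 0‖ ∂ν
        ≤ ∫⁻ y in {y : ℝ | |y| ≤ 1}, ENNReal.ofReal (H * |y| ^ β) ∂ν := by
      refine setLIntegral_mono' B_meas fun y hy => ?_
      have hy' : |y| ≤ 1 := hy
      rw [if_pos hy']
      exact ENNReal.ofReal_le_ofReal
        (by rw [Real.norm_eq_abs]; exact taylor_bound (by linarith) hH0 hd hH hx hy')
    refine lt_of_le_of_lt (hb1.trans ((lintegral_ball_le _).trans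
      (nu_shell hM.le hρ le_rfl le_rfl hH0 ?_))) ENNReal.ofReal_lt_top
    exact (intervalIntegral.intervalIntegrable_rpow' (by linarith)).1
  have houter : ∫⁻ y in {y : ℝ | |y| ≤ 1}ᶜ,
      ENNReal.ofReal ‖φ (x + y) - φ x - if |y| ≤ 1 then y * φ' x else 0‖ ∂ν < ⊤ := by
    rw [hcompl]
    have hb2 : ∫⁻ y in {y : ℝ | 1 < |y|},
        ENNReal.ofReal ‖φ (x + y) - φ x - if |y| ≤ 1 then y * φ' x else 0‖ ∂ν
        ≤ ∫⁻ y in {y : ℝ | 1 < |y|}, ENNReal.ofReal |L| * ENNReal.ofReal |y| ∂ν := by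
      refine setLIntegral_mono' (by rw [← hcompl]; exact B_meas.compl) fun y hy => ?_
      have hy' : (1:ℝ) < |y| := hy
      rw [if_neg (not_le.2 hy'), sub_zero, ← ENNReal.ofReal_mul (abs_nonneg L)]
      refine ENNReal.ofReal_le_ofReal ?_
      rw [Real.norm_eq_abs]
      calc |φ (x + y) - φ x| ≤ L * |x + y - x| := hL _ _
        _ = L * |y| := by congr 1; congr 1; ring
        _ ≤ |L| * |y| := mul_le_mul_of_nonneg_right (le_abs_self L) (abs_nonneg y)
    rw [lintegral_const_mul' _ _ ENNReal.ofReal_ne_top] at hb2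
    refine lt_of_le_of_lt hb2 (ENNReal.mul_lt_top ENNReal.ofReal_lt_top ?_)
    have h2 := hmom.2
    rw [hasFiniteIntegral_iff_norm] at h2
    simpa [Real.norm_eq_abs, abs_abs] using h2
  exact ENNReal.add_lt_top.2 ⟨hball, houter⟩

lemma final_numeric {M α β H L R K δ : ℝ}
    (hM : 0 < M) (hα1 : 1 ≤ α) (hβα : α < β) (hβ2 : β < 2)
    (hR1 : 1 ≤ R) (hδ0 : 0 < δ) (hδR : δ ≤ R)
    (hH0 : 0 ≤ H) (hL0 : 0 ≤ L) (hK0 : 0 ≤ K) :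
    2*H*M*(2*(min (Real.sqrt δ) 1 ^ (β-α)/(β-α)))
      + 2*(H*δ^(β-1))*M*(2*(min (Real.sqrt δ) 1 ^ (1-(α+β)/2)/((α+β)/2-1)))
      + 2*L*δ*K
    ≤ (4*M/(β-α) + 4*M*R^(β-1)/((α+β)/2-1) + 2*K*R^(1-(β-α)/2) + 1) * (L+H)
        * δ^((β-α)/2) := by
  set ε := min (Real.sqrt δ) 1 with hεdef
  set θ := (β-α)/2 with hθdef
  have hβ1 : 1 < β := lt_of_le_of_lt hα1 hβα
  have hθ0 : 0 < θ := by rw [hθdef]; linarith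
  have hθh : θ < 1/2 := by rw [hθdef]; linarith
  have hba : 0 < β - α := by linarith
  have hα'1 : 0 < (α+β)/2 - 1 := by linarith
  have hδθ0 : (0:ℝ) ≤ δ^θ := Real.rpow_nonneg hδ0.le _
  have hRb0 : (0:ℝ) ≤ R^(β-1) := Real.rpow_nonneg (by linarith) _
  have hR1b : (1:ℝ) ≤ R^(β-1) := by
    have := Real.rpow_le_rpow_of_exponent_le hR1 (by linarith : (0:ℝ) ≤ β-1)
    rwa [Real.rpow_zero] at this
  have hRt0 : (0:ℝ) ≤ R^(1-θ) := Real.rpow_nonneg (by linarith) _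
  have c1 : ε^(β-α) ≤ δ^θ := by
    rcases le_or_gt δ 1 with h | h
    · have hs1 : Real.sqrt δ ≤ 1 := by
        rw [show (1:ℝ) = Real.sqrt 1 by simp]
        exact Real.sqrt_le_sqrt h
      rw [hεdef, min_eq_left hs1, Real.sqrt_eq_rpow, ← Real.rpow_mul hδ0.le, hθdef]
      apply le_of_eq
      congr 1
      ring
    · have hs1 : (1:ℝ) ≤ Real.sqrt δ := by
        rw [show (1:ℝ) = Real.sqrt 1 by simp]
        exact Real.sqrt_le_sqrt h.le
      rw [hεdef, min_eq_right hs1, Real.one_rpow]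
      have := Real.rpow_le_rpow_of_exponent_le h.le (le_of_lt hθ0)
      rwa [Real.rpow_zero] at this
  have c2 : δ^(β-1) * ε^(1-(α+β)/2) ≤ R^(β-1) * δ^θ := by
    rcases le_or_gt δ 1 with h | h
    · have hs1 : Real.sqrt δ ≤ 1 := by
        rw [show (1:ℝ) = Real.sqrt 1 by simp]
        exact Real.sqrt_le_sqrt h
      rw [hεdef, min_eq_left hs1, Real.sqrt_eq_rpow, ← Real.rpow_mul hδ0.le,
        ← Real.rpow_add hδ0]
      have hE : θ ≤ β - 1 + 1/2 * (1-(α+β)/2) := by rw [hθdef]; linarith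
      have h1 : δ ^ (β - 1 + 1/2 * (1-(α+β)/2)) ≤ δ^θ :=
        Real.rpow_le_rpow_of_exponent_ge hδ0 h hE
      calc δ ^ (β - 1 + 1/2 * (1-(α+β)/2)) ≤ δ^θ := h1
        _ = 1 * δ^θ := by ring
        _ ≤ R^(β-1) * δ^θ := mul_le_mul_of_nonneg_right hR1b hδθ0
    · have hs1 : (1:ℝ) ≤ Real.sqrt δ := by
        rw [show (1:ℝ) = Real.sqrt 1 by simp]
        exact Real.sqrt_le_sqrt h.le
      rw [hεdef, min_eq_right hs1, Real.one_rpow, mul_one]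
      have h1 : δ^(β-1) = δ^(β-1-θ) * δ^θ := by
        rw [← Real.rpow_add hδ0]; congr 1; ring
      rw [h1]
      refine mul_le_mul_of_nonneg_right ?_ hδθ0
      calc δ^(β-1-θ) ≤ R^(β-1-θ) :=
            Real.rpow_le_rpow hδ0.le hδR (by rw [hθdef]; linarith)
        _ ≤ R^(β-1) := Real.rpow_le_rpow_of_exponent_le hR1 (by linarith)
  have c3 : δ ≤ R^(1-θ) * δ^θ := by
    calc δ = δ^((1-θ)+θ) := by norm_num
      _ = δ^(1-θ) * δ^θ := Real.rpow_add hδ0 _ _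
      _ ≤ R^(1-θ) * δ^θ :=
          mul_le_mul_of_nonneg_right (Real.rpow_le_rpow hδ0.le hδR (by linarith)) hδθ0
  have e1 : 2*H*M*(2*(ε^(β-α)/(β-α))) ≤ (4*M/(β-α)) * H * δ^θ := by
    have h0 : 2*H*M*(2*(ε^(β-α)/(β-α))) = (4*M/(β-α)) * H * ε^(β-α) := by ring
    rw [h0]
    exact mul_le_mul_of_nonneg_left c1 (by positivity)
  have e2 : 2*(H*δ^(β-1))*M*(2*(ε^(1-(α+β)/2)/((α+β)/2-1)))
      ≤ (4*M*R^(β-1)/((α+β)/2-1)) * H * δ^θ := by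
    have h0 : 2*(H*δ^(β-1))*M*(2*(ε^(1-(α+β)/2)/((α+β)/2-1)))
        = (4*M/((α+β)/2-1)) * H * (δ^(β-1) * ε^(1-(α+β)/2)) := by ring
    have h2 : (4*M*R^(β-1)/((α+β)/2-1)) * H * δ^θ
        = (4*M/((α+β)/2-1)) * H * (R^(β-1) * δ^θ) := by ring
    rw [h0, h2]
    exact mul_le_mul_of_nonneg_left c2 (by positivity)
  have e3 : 2*L*δ*K ≤ (2*K*R^(1-θ)) * L * δ^θ := by
    have h0 : 2*L*δ*K = (2*K*L) * δ := by ring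
    have h2 : (2*K*R^(1-θ)) * L * δ^θ = (2*K*L) * (R^(1-θ) * δ^θ) := by ring
    rw [h0, h2]
    exact mul_le_mul_of_nonneg_left c3 (by positivity)
  have expand : (4*M/(β-α) + 4*M*R^(β-1)/((α+β)/2-1) + 2*K*R^(1-θ) + 1) * (L+H) * δ^θ
      = (4*M/(β-α)) * H * δ^θ + (4*M*R^(β-1)/((α+β)/2-1)) * H * δ^θ
        + (2*K*R^(1-θ)) * L * δ^θ
        + ((4*M/(β-α)) * L + (4*M*R^(β-1)/((α+β)/2-1)) * L + (2*K*R^(1-θ)) * H + L + H)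
            * δ^θ := by ring
  have hrest : 0 ≤ ((4*M/(β-α)) * L + (4*M*R^(β-1)/((α+β)/2-1)) * L
      + (2*K*R^(1-θ)) * H + L + H) * δ^θ := by positivity
  linarith [e1, e2, e3]

end Helpers

theorem stmt_2
    (ν : Measure ℝ) (ρ : ℝ → ℝ≥0∞) (M α β L H l r : ℝ)
    (hν : ν = MeasureTheory.volume.withDensity ρ)
    (hM : 0 < M) (hα1 : 1 ≤ α) (hα2 : α < 2)
    (hρ : ∀ y : ℝ, y ≠ 0 → |y| ≤ 1 → ρ y ≤ ENNReal.ofReal (M / |y| ^ (1 + α)))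
    (hmom : IntegrableOn (fun y => |y|) {y : ℝ | 1 < |y|} ν)
    (hlr : l < r) (hβα : α < β) (hβ2 : β < 2)
    (φ φ' : ℝ → ℝ)
    (hL : ∀ x₁ x₂ : ℝ, |φ x₁ - φ x₂| ≤ L * |x₁ - x₂|)
    (hd : ∀ x ∈ Ioo (l - 1) (r + 1), HasDerivAt φ (φ' x) x)
    (hH : ∀ x₁ ∈ Ioo (l - 1) (r + 1), ∀ x₂ ∈ Ioo (l - 1) (r + 1),
      |φ' x₁ - φ' x₂| ≤ H * |x₁ - x₂| ^ (β - 1)) :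
    ∃ C : ℝ, 0 < C ∧ ∀ x₁ ∈ Ioo l r, ∀ x₂ ∈ Ioo l r,
      |(∫ y, (φ (x₁ + y) - φ x₁ - (if |y| ≤ 1 then y * φ' x₁ else 0)) ∂ν) -
        ∫ y, (φ (x₂ + y) - φ x₂ - (if |y| ≤ 1 then y * φ' x₂ else 0)) ∂ν| ≤
      C * (L + H) * |x₁ - x₂| ^ ((β - α) / 2) := by
  subst hν
  set ν := MeasureTheory.volume.withDensity ρ with hν
  have hβ1 : 1 < β := lt_of_le_of_lt hα1 hβα
  have hL0 : 0 ≤ L := by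
    have h := hL 0 1
    have h2 : |(0:ℝ) - 1| = 1 := by norm_num
    rw [h2, mul_one] at h
    exact le_trans (abs_nonneg _) h
  have hH0 : 0 ≤ H := by
    have hp : (l + r)/2 ∈ Ioo (l - 1) (r + 1) := Set.mem_Ioo.2 ⟨by linarith, by linarith⟩
    have hq : (l + r)/2 + 1/2 ∈ Ioo (l - 1) (r + 1) := Set.mem_Ioo.2 ⟨by linarith, by linarith⟩
    have h := hH _ hp _ hq
    have h2 : |(l + r)/2 - ((l + r)/2 + 1/2)| = 1/2 := by
      rw [abs_of_nonpos (by linarith)]; ring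
    rw [h2] at h
    have h3 : (0:ℝ) < (1/2 : ℝ) ^ (β - 1) := Real.rpow_pos_of_pos (by norm_num) _
    nlinarith [abs_nonneg (φ' ((l + r)/2) - φ' ((l + r)/2 + 1/2))]
  have hφc : Continuous φ := by
    have hlip : LipschitzWith (Real.toNNReal L) φ := by
      refine LipschitzWith.of_dist_le_mul fun a b => ?_
      rw [Real.dist_eq, Real.dist_eq]
      exact (hL a b).trans
        (mul_le_mul_of_nonneg_right (Real.le_coe_toNNReal L) (abs_nonneg _))
    exact hlip.continuous
  have hS3m : MeasurableSet {y : ℝ | 1 < |y|} := by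
    have h : {y : ℝ | 1 < |y|} = {y : ℝ | |y| ≤ 1}ᶜ := by ext y; simp [not_le]
    rw [h]; exact B_meas.compl
  set Λ := ∫⁻ y in {y : ℝ | 1 < |y|}, ENNReal.ofReal |y| ∂ν with hΛdef
  have hΛ : Λ ≠ ⊤ := by
    have h2 := hmom.2
    rw [hasFiniteIntegral_iff_norm] at h2
    have h3 : Λ = ∫⁻ y in {y : ℝ | 1 < |y|}, ENNReal.ofReal ‖|y|‖ ∂ν := by
      rw [hΛdef]; congr 1; funext y; rw [Real.norm_eq_abs, abs_abs]
    rw [h3]; exact h2.ne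
  set K := Λ.toReal with hKdef
  have hK0 : 0 ≤ K := ENNReal.toReal_nonneg
  have hνS3 : ν {y : ℝ | 1 < |y|} ≤ ENNReal.ofReal K := by
    rw [hKdef, ENNReal.ofReal_toReal hΛ, hΛdef, ← setLIntegral_one]
    refine setLIntegral_mono' hS3m fun y hy => ?_
    calc (1:ℝ≥0∞) = ENNReal.ofReal 1 := by simp
      _ ≤ ENNReal.ofReal |y| := ENNReal.ofReal_le_ofReal (le_of_lt hy)
  have hba : 0 < β - α := by linarith
  have hα'1 : 0 < (α+β)/2 - 1 := by linarith
  have hR1 : (1:ℝ) ≤ max (r-l) 1 := le_max_right _ _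
  refine ⟨4*M/(β-α) + 4*M*(max (r-l) 1)^(β-1)/((α+β)/2-1)
      + 2*K*(max (r-l) 1)^(1-(β-α)/2) + 1, ?_, ?_⟩
  · have h1 : 0 < 4*M/(β-α) := by positivity
    have h2 : 0 ≤ 4*M*(max (r-l) 1)^(β-1)/((α+β)/2-1) := by positivity
    have h3 : 0 ≤ 2*K*(max (r-l) 1)^(1-(β-α)/2) := by positivity
    linarith
  intro x₁ hx₁ x₂ hx₂
  by_cases hxeq : x₁ = x₂
  · subst hxeq
    simp only [sub_self, abs_zero]
    rw [Real.zero_rpow (by positivity : (β-α)/2 ≠ 0)]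
    simp
  have hδ0 : 0 < |x₁ - x₂| := abs_pos.2 (sub_ne_zero.2 hxeq)
  set δ := |x₁ - x₂| with hδdef
  have hδR : δ ≤ max (r-l) 1 := by
    have h1 : x₁ - x₂ < r - l := by linarith [hx₁.2, hx₂.1]
    have h2 : -(r - l) < x₁ - x₂ := by linarith [hx₁.1, hx₂.2]
    exact le_trans (le_of_lt (abs_lt.2 ⟨h2, h1⟩)) (le_max_left _ _)
  set ε := min (Real.sqrt δ) 1 with hεdef
  have hε0 : 0 < ε := lt_min (Real.sqrt_pos.2 hδ0) one_pos
  have hε1 : ε ≤ 1 := min_le_right _ _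
  have hx₁' : x₁ ∈ Ioo (l-1) (r+1) := Set.mem_Ioo.2 ⟨by linarith [hx₁.1], by linarith [hx₁.2]⟩
  have hx₂' : x₂ ∈ Ioo (l-1) (r+1) := Set.mem_Ioo.2 ⟨by linarith [hx₂.1], by linarith [hx₂.2]⟩
  have hI1 := integrable_g hM hα1 hβα hβ2 hρ hmom hφc hL hd hH hH0 hx₁
  have hI2 := integrable_g hM hα1 hβα hβ2 hρ hmom hφc hL hd hH hH0 hx₂
  set g₁ : ℝ → ℝ := fun y => φ (x₁ + y) - φ x₁ - if |y| ≤ 1 then y * φ' x₁ else 0 with hg₁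
  set g₂ : ℝ → ℝ := fun y => φ (x₂ + y) - φ x₂ - if |y| ≤ 1 then y * φ' x₂ else 0 with hg₂
  have habs : |(∫ y, g₁ y ∂ν) - ∫ y, g₂ y ∂ν| ≤ ∫ y, |g₁ y - g₂ y| ∂ν := by
    rw [← integral_sub hI1 hI2]
    have h := norm_integral_le_integral_norm (μ := ν) (f := fun y => g₁ y - g₂ y)
    simpa [Real.norm_eq_abs] using h
  have heqlin : ∫ y, |g₁ y - g₂ y| ∂ν
      = (∫⁻ y, ENNReal.ofReal |g₁ y - g₂ y| ∂ν).toReal := by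
    have hsm := (hI1.sub hI2).aestronglyMeasurable.norm
    simp only [Real.norm_eq_abs] at hsm
    exact integral_eq_lintegral_of_nonneg_ae (ae_of_all _ fun y => abs_nonneg _) hsm
  set F : ℝ → ℝ≥0∞ := fun y => ENNReal.ofReal |g₁ y - g₂ y| with hF
  have hsplit : ∫⁻ y, F y ∂ν
      = (∫⁻ y in {y : ℝ | |y| ≤ 1}, F y ∂ν) + ∫⁻ y in {y : ℝ | 1 < |y|}, F y ∂ν := by
    have hBc : {y : ℝ | |y| ≤ 1}ᶜ = {y : ℝ | 1 < |y|} := by ext y; simp [not_le]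
    rw [← lintegral_add_compl F B_meas, hBc]
  have hcover : {y : ℝ | |y| ≤ 1} ⊆ {y : ℝ | |y| ≤ ε} ∪ {y : ℝ | ε < |y| ∧ |y| ≤ 1} := by
    intro y hy
    rcases le_or_gt (|y|) ε with h | h
    · exact Or.inl h
    · exact Or.inr ⟨h, hy⟩
  have hball_le : ∫⁻ y in {y : ℝ | |y| ≤ 1}, F y ∂ν
      ≤ (∫⁻ y in {y : ℝ | |y| ≤ ε}, F y ∂ν)
        + ∫⁻ y in {y : ℝ | ε < |y| ∧ |y| ≤ 1}, F y ∂ν :=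
    le_trans (lintegral_mono_set hcover) (lintegral_union_le _ _ _)
  have hA1 : ∫⁻ y in {y : ℝ | |y| ≤ ε}, F y ∂ν
      ≤ ENNReal.ofReal (2*H*M*(2*(ε^(β-α)/(β-α)))) := by
    have hmono : ∫⁻ y in {y : ℝ | |y| ≤ ε}, F y ∂ν
        ≤ ∫⁻ y in {y : ℝ | |y| ≤ ε}, ENNReal.ofReal (2*H * |y|^β) ∂ν := by
      refine setLIntegral_mono' (measurable_abs measurableSet_Iic) fun y hy => ?_
      have hyε : |y| ≤ ε := hy
      have hy1 : |y| ≤ 1 := hyε.trans hε1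
      refine ENNReal.ofReal_le_ofReal ?_
      have e1 := taylor_bound hβ1.le hH0 hd hH hx₁ hy1
      have e2 := taylor_bound hβ1.le hH0 hd hH hx₂ hy1
      simp only [hg₁, hg₂, if_pos hy1]
      calc |φ (x₁ + y) - φ x₁ - y * φ' x₁ - (φ (x₂ + y) - φ x₂ - y * φ' x₂)|
          ≤ |φ (x₁ + y) - φ x₁ - y * φ' x₁| + |φ (x₂ + y) - φ x₂ - y * φ' x₂| :=
            abs_sub _ _
        _ ≤ H * |y|^β + H * |y|^β := add_le_add e1 e2
        _ = 2*H * |y|^β := by ring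
    refine hmono.trans ((lintegral_ball_le _).trans ?_)
    have hint1 : IntegrableOn (fun y : ℝ => y ^ (β - (1+α))) (Ioc 0 ε) :=
      (intervalIntegral.intervalIntegrable_rpow' (by linarith)).1
    have hns := nu_shell hM.le hρ (le_refl (0:ℝ)) hε1 (by linarith : (0:ℝ) ≤ 2*H) hint1
    have hJ1 : ∫ y in Ioc 0 ε, y ^ (β - (1+α)) = ε^(β-α)/(β-α) := by
      rw [← intervalIntegral.integral_of_le hε0.le,
        integral_rpow (Or.inl (by linarith : (-1:ℝ) < β - (1+α)))]
      rw [Real.zero_rpow (by linarith : β - (1+α) + 1 ≠ 0)]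
      rw [show β - (1+α) + 1 = β - α by ring]
      ring
    rw [hJ1] at hns
    exact hns
  have hA2 : ∫⁻ y in {y : ℝ | ε < |y| ∧ |y| ≤ 1}, F y ∂ν
      ≤ ENNReal.ofReal (2*(H*δ^(β-1))*M*(2*(ε^(1-(α+β)/2)/((α+β)/2-1)))) := by
    have hδb0 : (0:ℝ) ≤ H*δ^(β-1) := mul_nonneg hH0 (Real.rpow_nonneg hδ0.le _)
    have hc2 : (0:ℝ) ≤ 2*(H*δ^(β-1)) := by linarith
    have hmono : ∫⁻ y in {y : ℝ | ε < |y| ∧ |y| ≤ 1}, F y ∂ν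
        ≤ ∫⁻ y in {y : ℝ | ε < |y| ∧ |y| ≤ 1},
            ENNReal.ofReal ((2*(H*δ^(β-1))) * |y|^(1:ℝ)) ∂ν := by
      refine setLIntegral_mono' shell_meas fun y hy => ?_
      obtain ⟨hyε, hy1⟩ := hy
      refine ENNReal.ofReal_le_ofReal ?_
      have e1 := diff_mvt hd hH hx₁ hx₂ hy1
      have e2 := hH _ hx₁' _ hx₂'
      simp only [hg₁, hg₂, if_pos hy1]
      have hre : φ (x₁ + y) - φ x₁ - y * φ' x₁ - (φ (x₂ + y) - φ x₂ - y * φ' x₂)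
          = (φ (x₁ + y) - φ (x₂ + y) - (φ x₁ - φ x₂)) - y * (φ' x₁ - φ' x₂) := by ring
      rw [hre]
      calc |(φ (x₁ + y) - φ (x₂ + y) - (φ x₁ - φ x₂)) - y * (φ' x₁ - φ' x₂)|
          ≤ |φ (x₁ + y) - φ (x₂ + y) - (φ x₁ - φ x₂)| + |y * (φ' x₁ - φ' x₂)| :=
            abs_sub _ _
        _ ≤ H * δ^(β-1) * |y| + |y| * (H * δ^(β-1)) := by
            refine add_le_add e1 ?_
            rw [abs_mul]
            exact mul_le_mul_of_nonneg_left e2 (abs_nonneg y)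
        _ = (2*(H*δ^(β-1))) * |y|^(1:ℝ) := by rw [Real.rpow_one]; ring
    refine hmono.trans ?_
    have h0uIcc : (0:ℝ) ∉ uIcc ε 1 := notMem_uIcc_of_lt hε0 one_pos
    have hint2 : IntegrableOn (fun y : ℝ => y ^ ((1:ℝ) - (1+α))) (Ioc ε 1) :=
      (intervalIntegral.intervalIntegrable_rpow (Or.inr h0uIcc)).1
    have hns := nu_shell hM.le hρ hε0.le le_rfl hc2 hint2
    refine hns.trans (ENNReal.ofReal_le_ofReal ?_)
    have hJ2 : ∫ y in Ioc ε 1, y ^ ((1:ℝ) - (1+α)) ≤ ε^(1-(α+β)/2)/((α+β)/2-1) := by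
      set α' := (α+β)/2 with hα'def
      have hα'gt1 : 1 < α' := by rw [hα'def]; linarith
      have hint2' : IntegrableOn (fun y : ℝ => y ^ (-α')) (Ioc ε 1) :=
        (intervalIntegral.intervalIntegrable_rpow (Or.inr h0uIcc)).1
      have hmono2 : ∫ y in Ioc ε 1, y ^ ((1:ℝ) - (1+α)) ≤ ∫ y in Ioc ε 1, y ^ (-α') := by
        refine setIntegral_mono_on hint2 hint2' measurableSet_Ioc fun y hy => ?_
        have hy0 : 0 < y := lt_trans hε0 hy.1
        rw [show (1:ℝ) - (1+α) = -α by ring]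
        refine Real.rpow_le_rpow_of_exponent_ge hy0 hy.2 ?_
        rw [hα'def]; linarith
      have heval : ∫ y in Ioc ε 1, y ^ (-α') = (1 - ε^(-α'+1))/(-α'+1) := by
        rw [← intervalIntegral.integral_of_le hε1,
          integral_rpow (Or.inr ⟨by linarith, h0uIcc⟩), Real.one_rpow]
      have h1 : (1 - ε^(-α'+1))/(-α'+1) = (ε^(-α'+1) - 1)/(α'-1) := by
        have hne2 : α' - 1 ≠ 0 := by linarith
        have hne : -α' + 1 ≠ 0 := by intro hcon; apply hne2; linarith
        field_simp
        ring
      have h2 : (ε^(-α'+1) - 1)/(α'-1) ≤ ε^(-α'+1)/(α'-1) :=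
        div_le_div_of_nonneg_right (by linarith) (by linarith)
      have h3 : ε^(-α'+1) = ε^(1-α') := by rw [show -α'+1 = 1-α' by ring]
      calc ∫ y in Ioc ε 1, y ^ ((1:ℝ) - (1+α)) ≤ ∫ y in Ioc ε 1, y ^ (-α') := hmono2
        _ = (1 - ε^(-α'+1))/(-α'+1) := heval
        _ = (ε^(-α'+1) - 1)/(α'-1) := h1
        _ ≤ ε^(-α'+1)/(α'-1) := h2
        _ = ε^(1-α')/(α'-1) := by rw [h3]
    exact mul_le_mul_of_nonneg_left (mul_le_mul_of_nonneg_left hJ2 (by norm_num))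
      (mul_nonneg (mul_nonneg (by norm_num) hδb0) hM.le)
  have hA3 : ∫⁻ y in {y : ℝ | 1 < |y|}, F y ∂ν ≤ ENNReal.ofReal (2*L*δ*K) := by
    have hmono : ∫⁻ y in {y : ℝ | 1 < |y|}, F y ∂ν
        ≤ ∫⁻ y in {y : ℝ | 1 < |y|}, ENNReal.ofReal (2*L*δ) ∂ν := by
      refine setLIntegral_mono' hS3m fun y hy => ?_
      have hy' : (1:ℝ) < |y| := hy
      refine ENNReal.ofReal_le_ofReal ?_
      simp only [hg₁, hg₂, if_neg (not_le.2 hy'), sub_zero]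
      have hre : φ (x₁ + y) - φ x₁ - (φ (x₂ + y) - φ x₂)
          = (φ (x₁ + y) - φ (x₂ + y)) - (φ x₁ - φ x₂) := by ring
      rw [hre]
      calc |(φ (x₁ + y) - φ (x₂ + y)) - (φ x₁ - φ x₂)|
          ≤ |φ (x₁ + y) - φ (x₂ + y)| + |φ x₁ - φ x₂| := abs_sub _ _
        _ ≤ L * |x₁ + y - (x₂ + y)| + L * |x₁ - x₂| := add_le_add (hL _ _) (hL _ _)
        _ = 2*L*δ := by rw [show x₁ + y - (x₂ + y) = x₁ - x₂ by ring, ← hδdef]; ring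
    refine hmono.trans ?_
    rw [setLIntegral_const]
    calc ENNReal.ofReal (2*L*δ) * ν {y : ℝ | 1 < |y|}
        ≤ ENNReal.ofReal (2*L*δ) * ENNReal.ofReal K := mul_le_mul_right hνS3 _
      _ = ENNReal.ofReal (2*L*δ*K) := by
          rw [← ENNReal.ofReal_mul (by positivity)]
  have hT1 : 0 ≤ 2*H*M*(2*(ε^(β-α)/(β-α))) :=
    mul_nonneg (mul_nonneg (mul_nonneg (by norm_num) hH0) hM.le)
      (mul_nonneg (by norm_num) (div_nonneg (Real.rpow_nonneg hε0.le _) hba.le))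
  have hT2 : 0 ≤ 2*(H*δ^(β-1))*M*(2*(ε^(1-(α+β)/2)/((α+β)/2-1))) :=
    mul_nonneg (mul_nonneg (mul_nonneg (by norm_num)
        (mul_nonneg hH0 (Real.rpow_nonneg hδ0.le _))) hM.le)
      (mul_nonneg (by norm_num) (div_nonneg (Real.rpow_nonneg hε0.le _) hα'1.le))
  have hT3 : 0 ≤ 2*L*δ*K :=
    mul_nonneg (mul_nonneg (mul_nonneg (by norm_num) hL0) hδ0.le) hK0
  have htot : ∫⁻ y, F y ∂ν
      ≤ ENNReal.ofReal (2*H*M*(2*(ε^(β-α)/(β-α)))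
          + 2*(H*δ^(β-1))*M*(2*(ε^(1-(α+β)/2)/((α+β)/2-1))) + 2*L*δ*K) := by
    rw [hsplit]
    refine le_trans (add_le_add (hball_le.trans (add_le_add hA1 hA2)) hA3) ?_
    rw [ENNReal.ofReal_add (by linarith) hT3, ENNReal.ofReal_add hT1 hT2]
  calc |(∫ y, g₁ y ∂ν) - ∫ y, g₂ y ∂ν| ≤ ∫ y, |g₁ y - g₂ y| ∂ν := habs
    _ = (∫⁻ y, F y ∂ν).toReal := heqlin
    _ ≤ 2*H*M*(2*(ε^(β-α)/(β-α)))
          + 2*(H*δ^(β-1))*M*(2*(ε^(1-(α+β)/2)/((α+β)/2-1))) + 2*L*δ*K := by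
        refine le_trans (ENNReal.toReal_mono ENNReal.ofReal_ne_top htot) ?_
        rw [ENNReal.toReal_ofReal (by linarith)]
    _ ≤ (4*M/(β-α) + 4*M*(max (r-l) 1)^(β-1)/((α+β)/2-1)
          + 2*K*(max (r-l) 1)^(1-(β-α)/2) + 1) * (L+H) * δ^((β-α)/2) := by
        rw [hεdef]
        exact final_numeric hM hα1 hβα hβ2 hR1 hδ0 hδR hH0 hL0 hK0
end

section
/- Maximum principle for a nonlocal parabolic operator: Let a, b, c : ℝ × [0,T] → ℝ be continuous with a > 0, a and b bounded, and c ≥ −C₀ for some constant C₀ ≥ 0. Let ν be a Lévy measure with ∫_{|y|≤1} y² ν(dy) < ∞ and ∫_{|y|>1} |y| ν(dy) < ∞. Suppose v is continuous on ℝ × [0,T], C^{2,1} on ℝ × (0,T], bounded from below, and satisfies ∂_t v(x,t) − a(x,t) ∂²_{xx} v(x,t) − b(x,t) ∂_x v(x,t) − I v(x,t) + c(x,t) v(x,t) ≥ 0 for all (x,t) ∈ ℝ × (0,T], where I v(x,t) = ∫_ℝ [v(x+y,t) − v(x,t) − y ∂_x v(x,t) 1_{|y|≤1}] ν(dy). If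 v(x,0) ≥ 0 for all x ∈ ℝ, then v ≥ 0 on ℝ × [0,T]. -/
set_option linter.unusedTactic false
set_option linter.unreachableTactic false

open MeasureTheory Set Filter Topology


noncomputable def bf (x : ℝ) : ℝ := Real.sqrt (1 + x ^ 2)
noncomputable def bf' (x : ℝ) : ℝ := x / Real.sqrt (1 + x ^ 2)
noncomputable def bf'' (x : ℝ) : ℝ := 1 / Real.sqrt (1 + x ^ 2) ^ 3

lemma sq_pos (x : ℝ) : (0:ℝ) < 1 + x ^ 2 := by positivity

lemma bf_pos (x : ℝ) : 0 < bf x := Real.sqrt_pos.2 (sq_pos x)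

lemma bf_ge_one (x : ℝ) : 1 ≤ bf x := by
  rw [show (1:ℝ) = Real.sqrt 1 by simp [Real.sqrt_one]]
  exact Real.sqrt_le_sqrt (by nlinarith [sq_nonneg x])

lemma bf_ge_abs (x : ℝ) : |x| ≤ bf x := by
  rw [← Real.sqrt_sq_eq_abs]
  exact Real.sqrt_le_sqrt (by nlinarith)

lemma bf_hasDeriv (x : ℝ) : HasDerivAt bf (bf' x) x := by
  have h : HasDerivAt (fun x : ℝ => 1 + x ^ 2) (2 * x) x := by
    simpa using ((hasDerivAt_pow 2 x).const_add 1)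
  have := (h.sqrt (by positivity))
  convert this using 1
  · rfl
  unfold bf'
  field_simp

lemma bf'_hasDeriv (x : ℝ) : HasDerivAt bf' (bf'' x) x := by
  have hs : Real.sqrt (1 + x ^ 2) ≠ 0 := (bf_pos x).ne'
  have h : HasDerivAt (fun x : ℝ => x / Real.sqrt (1 + x ^ 2))
      ((1 * Real.sqrt (1 + x ^ 2) - x * bf' x) / (Real.sqrt (1 + x ^ 2)) ^ 2) x := by
    exact (hasDerivAt_id x).div (bf_hasDeriv x) hs
  convert h using 1
  · rfl
  unfold bf'' bf'
  have hsq : Real.sqrt (1 + x ^ 2) ^ 2 = 1 + x ^ 2 := Real.sq_sqrt (sq_pos x).le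
  have hcube : Real.sqrt (1 + x ^ 2) ^ 3 = Real.sqrt (1 + x ^ 2) * (1 + x ^ 2) := by
    rw [pow_succ, hsq]; ring
  field_simp
  rw [hsq]; ring

lemma bf'_abs_le (x : ℝ) : |bf' x| ≤ 1 := by
  have h0 := bf_pos x
  have h2 := bf_ge_abs x
  unfold bf' ; unfold bf at h0 h2
  rw [abs_div, abs_of_pos h0, div_le_one h0]
  exact h2

lemma bf''_bounds (x : ℝ) : 0 < bf'' x ∧ bf'' x ≤ 1 := by
  have h1 := bf_ge_one x
  have h0 := bf_pos x
  constructor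
  · unfold bf''; positivity
  · unfold bf''
    rw [div_le_one (by positivity)]
    exact one_le_pow₀ (by simpa [bf] using h1)


/-- MVT bound on a segment. -/
lemma abs_sub_le_of_deriv {g g' : ℝ → ℝ} {p q C : ℝ} (hpq : p ≤ q)
    (h : ∀ x ∈ Icc p q, HasDerivAt g (g' x) x)
    (hb : ∀ x ∈ Icc p q, |g' x| ≤ C) : |g q - g p| ≤ C * (q - p) := by
  have := norm_image_sub_le_of_norm_deriv_le_segment'
    (f := g) (f' := g') (a := p) (b := q)
    (fun x hx => (h x hx).hasDerivWithinAt)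
    (fun x hx => hb x (Ico_subset_Icc_self hx)) q (right_mem_Icc.2 hpq)
  simpa [Real.norm_eq_abs] using this

/-- second derivative nonneg at a global min. -/
lemma second_deriv_nonneg_of_min {g g' : ℝ → ℝ} {g'' x : ℝ}
    (hg : ∀ z, HasDerivAt g (g' z) z) (hg' : HasDerivAt g' g'' x)
    (hmin : ∀ z, g x ≤ g z) (h0 : g' x = 0) : 0 ≤ g'' := by
  by_contra hneg
  push_neg at hneg
  have hslope : Tendsto (fun z => (g' z - g' x) / (z - x)) (𝓝[≠] x) (𝓝 g'') := by
    have := hasDerivAt_iff_tendsto_slope.1 hg'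
    exact this.congr (fun z => slope_def_field g' x z)
  have hev : ∀ᶠ z in 𝓝[≠] x, (g' z - g' x) / (z - x) < 0 :=
    hslope.eventually (eventually_lt_nhds hneg)
  rw [eventually_nhdsWithin_iff] at hev
  obtain ⟨δ, hδ, hball⟩ := Metric.eventually_nhds_iff.1 hev
  -- pick z = x + δ/2 > x; then g' z < 0 on (x, x+δ/2]
  have hkey : ∀ z ∈ Ioc x (x + δ/2), g' z < 0 := by
    intro z hz
    have hzx : z ≠ x := ne_of_gt hz.1
    have hd : dist z x < δ := by
      rw [Real.dist_eq, abs_of_pos (sub_pos.2 hz.1)]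
      linarith [hz.2]
    have := hball hd hzx
    rw [h0, sub_zero] at this
    have hpos : 0 < z - x := sub_pos.2 hz.1
    by_contra h
    push_neg at h
    have := div_nonneg h hpos.le
    linarith
  -- MVT on [x, x+δ/2]
  have hlt : x < x + δ/2 := by linarith
  obtain ⟨c, hc, hceq⟩ := exists_hasDerivAt_eq_slope g g' hlt
    (fun z _ => (hg z).continuousAt.continuousWithinAt) (fun z _ => hg z)
  have hc0 : g' c < 0 := hkey c ⟨hc.1, hc.2.le⟩
  have : g (x + δ/2) - g x < 0 := by
    have h2 : (g (x + δ/2) - g x) / (x + δ/2 - x) < 0 := hceq ▸ hc0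
    have h3 : (0:ℝ) < x + δ/2 - x := by linarith
    exact (div_neg_iff.1 h2).resolve_left (fun h => absurd h3 (not_lt.2 h.2.le)) |>.1
  linarith [hmin (x + δ/2)]

/-- time derivative nonpos at min attained at right endpoint. -/
lemma deriv_nonpos_of_min_right {g : ℝ → ℝ} {d t₀ t₁ : ℝ} (ht : t₀ < t₁)
    (hg : HasDerivAt g d t₁) (hmin : ∀ t ∈ Ico t₀ t₁, g t₁ ≤ g t) : d ≤ 0 := by
  by_contra hpos
  push_neg at hpos
  have hslope : Tendsto (fun z => (g z - g t₁) / (z - t₁)) (𝓝[≠] t₁) (𝓝 d) := by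
    have := hasDerivAt_iff_tendsto_slope.1 hg
    exact this.congr (fun z => slope_def_field g t₁ z)
  have hev : ∀ᶠ z in 𝓝[≠] t₁, 0 < (g z - g t₁) / (z - t₁) :=
    hslope.eventually (eventually_gt_nhds hpos)
  rw [eventually_nhdsWithin_iff] at hev
  obtain ⟨δ, hδ, hball⟩ := Metric.eventually_nhds_iff.1 hev
  set z := max t₀ (t₁ - δ/2) with hz
  have hz1 : z < t₁ := by
    apply max_lt ht; linarith
  have hz0 : t₀ ≤ z := le_max_left _ _
  have hd : dist z t₁ < δ := by
    rw [Real.dist_eq, abs_of_neg (sub_neg.2 hz1)]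
    have : t₁ - δ/2 ≤ z := le_max_right _ _
    linarith
  have h2 := hball hd (ne_of_lt hz1)
  have h3 : z - t₁ < 0 := sub_neg.2 hz1
  have h4 : g z - g t₁ < 0 := by
    by_contra h
    push_neg at h
    have := div_nonpos_of_nonneg_of_nonpos h h3.le
    linarith
  linarith [hmin z ⟨hz0, hz1⟩, h4]

/-- bf is 1-Lipschitz. -/
lemma bf_lip (p q : ℝ) : |bf p - bf q| ≤ |p - q| := by
  rcases le_total q p with h | h
  · have := abs_sub_le_of_deriv h (fun x _ => bf_hasDeriv x) (fun x _ => bf'_abs_le x)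
    rw [abs_of_nonneg (sub_nonneg.2 h)]; linarith
  · have := abs_sub_le_of_deriv h (fun x _ => bf_hasDeriv x) (fun x _ => bf'_abs_le x)
    rw [abs_sub_comm, abs_sub_comm p q, abs_of_nonneg (sub_nonneg.2 h)]
    linarith

/-- bf' is 1-Lipschitz. -/
lemma bf'_lip (p q : ℝ) : |bf' p - bf' q| ≤ |p - q| := by
  rcases le_total q p with h | h
  · have := abs_sub_le_of_deriv h (fun x _ => bf'_hasDeriv x)
      (fun x _ => (abs_le.2 ⟨by linarith [(bf''_bounds x).1], (bf''_bounds x).2⟩))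
    rw [abs_of_nonneg (sub_nonneg.2 h)]; linarith
  · have := abs_sub_le_of_deriv h (fun x _ => bf'_hasDeriv x)
      (fun x _ => (abs_le.2 ⟨by linarith [(bf''_bounds x).1], (bf''_bounds x).2⟩))
    rw [abs_sub_comm, abs_sub_comm p q, abs_of_nonneg (sub_nonneg.2 h)]
    linarith

/-- Taylor bound for bf. -/
lemma bf_taylor (x y : ℝ) : |bf (x + y) - bf x - y * bf' x| ≤ y ^ 2 := by
  set g : ℝ → ℝ := fun s => bf (x + s) - s * bf' x with hg
  have hgd : ∀ s : ℝ, HasDerivAt g (bf' (x + s) - bf' x) s := by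
    intro s
    have h1 : HasDerivAt (fun s : ℝ => bf (x + s)) (bf' (x + s)) s := by
      have := (bf_hasDeriv (x + s)).comp s ((hasDerivAt_id s).const_add x)
      exact this.congr_deriv (mul_one _)
    have h2 := h1.sub ((hasDerivAt_id s).mul_const (bf' x))
    simp only [id, one_mul] at h2
    exact h2
  have hb : ∀ s ∈ Icc (min 0 y) (max 0 y), |bf' (x + s) - bf' x| ≤ |y| := by
    intro s hs
    refine le_trans (bf'_lip (x + s) x) ?_
    have h1 : |x + s - x| = |s| := by ring_nf
    rw [h1]
    rw [abs_le]
    constructor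
    · calc -|y| ≤ min 0 y := by rcases le_total 0 y with h|h <;> simp [min_eq_left, min_eq_right, h, abs_of_nonneg, abs_of_nonpos] <;> linarith [abs_nonneg y]
      _ ≤ s := hs.1
    · calc s ≤ max 0 y := hs.2
      _ ≤ |y| := by rcases le_total 0 y with h|h <;> simp [max_eq_left, max_eq_right, h, abs_of_nonneg, abs_of_nonpos] <;> linarith [abs_nonneg y]
  have hmm : min 0 y ≤ max 0 y := min_le_max
  have key := abs_sub_le_of_deriv hmm (fun s _ => hgd s) hb
  have hdiff : max 0 y - min 0 y = |y| := by
    rcases le_total 0 y with h|h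
    · rw [max_eq_right h, min_eq_left h, abs_of_nonneg h]; ring
    · rw [max_eq_left h, min_eq_right h, abs_of_nonpos h]; ring
  rw [hdiff] at key
  have hg0 : g 0 = bf x := by simp [hg]
  have hgy : g y = bf (x + y) - y * bf' x := by simp [hg]
  have habs : |bf (x + y) - bf x - y * bf' x| = |g (max 0 y) - g (min 0 y)| := by
    rcases le_total 0 y with h|h
    · rw [max_eq_right h, min_eq_left h, hg0, hgy]; ring_nf
    · rw [max_eq_left h, min_eq_right h, hg0, hgy, abs_sub_comm]; ring_nf
  rw [habs]
  calc |g (max 0 y) - g (min 0 y)| ≤ |y| * |y| := key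
    _ = y ^ 2 := by rw [← abs_mul, ← sq, abs_of_nonneg (sq_nonneg y)]


set_option maxHeartbeats 4000000 in
theorem stmt_13
    (T : ℝ) (hT : 0 < T)
    (a b c : ℝ → ℝ → ℝ)
    (ha_cont : ContinuousOn (fun q : ℝ × ℝ => a q.1 q.2) (univ ×ˢ Icc 0 T))
    (hb_cont : ContinuousOn (fun q : ℝ × ℝ => b q.1 q.2) (univ ×ˢ Icc 0 T))
    (hc_cont : ContinuousOn (fun q : ℝ × ℝ => c q.1 q.2) (univ ×ˢ Icc 0 T))
    (ha_pos : ∀ x : ℝ, ∀ t ∈ Icc (0:ℝ) T, 0 < a x t)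
    (Ma Mb : ℝ)
    (ha_bd : ∀ x : ℝ, ∀ t ∈ Icc (0:ℝ) T, |a x t| ≤ Ma)
    (hb_bd : ∀ x : ℝ, ∀ t ∈ Icc (0:ℝ) T, |b x t| ≤ Mb)
    (C₀ : ℝ) (hC₀ : 0 ≤ C₀)
    (hc_lb : ∀ x : ℝ, ∀ t ∈ Icc (0:ℝ) T, -C₀ ≤ c x t)
    (ν : Measure ℝ)
    (h1 : IntegrableOn (fun y => y ^ 2) {y : ℝ | |y| ≤ 1} ν)
    (h2 : IntegrableOn (fun y => |y|) {y : ℝ | 1 < |y|} ν)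
    (v vt vx vxx : ℝ → ℝ → ℝ)
    (hv_cont : ContinuousOn (fun q : ℝ × ℝ => v q.1 q.2) (univ ×ˢ Icc 0 T))
    (m : ℝ) (hv_lb : ∀ x : ℝ, ∀ t ∈ Icc (0:ℝ) T, -m ≤ v x t)
    (hvt : ∀ x : ℝ, ∀ t ∈ Ioc (0:ℝ) T, HasDerivAt (fun s => v x s) (vt x t) t)
    (hvx : ∀ x : ℝ, ∀ t ∈ Ioc (0:ℝ) T, HasDerivAt (fun z => v z t) (vx x t) x)
    (hvxx : ∀ x : ℝ, ∀ t ∈ Ioc (0:ℝ) T, HasDerivAt (fun z => vx z t) (vxx x t) x)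
    (hineq : ∀ x : ℝ, ∀ t ∈ Ioc (0:ℝ) T,
      0 ≤ vt x t - a x t * vxx x t - b x t * vx x t -
        (∫ y, (v (x + y) t - v x t - (if |y| ≤ 1 then y * vx x t else 0)) ∂ν) +
        c x t * v x t)
    (h0 : ∀ x : ℝ, 0 ≤ v x 0) :
    ∀ x : ℝ, ∀ t ∈ Icc (0:ℝ) T, 0 ≤ v x t := by
  -- measurable sets
  have hs1 : MeasurableSet {y : ℝ | |y| ≤ 1} :=
    (isClosed_le continuous_abs continuous_const).measurableSet
  have hs2 : MeasurableSet {y : ℝ | 1 < |y|} :=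
    (isOpen_lt continuous_const continuous_abs).measurableSet
  have hs2c : {y : ℝ | |y| ≤ 1}ᶜ = {y : ℝ | 1 < |y|} := by ext y; simp [not_le]
  -- constants
  set K1 : ℝ := ∫ y in {y : ℝ | |y| ≤ 1}, y ^ 2 ∂ν with hK1
  set K2 : ℝ := ∫ y in {y : ℝ | 1 < |y|}, |y| ∂ν with hK2
  have hK1n : 0 ≤ K1 := integral_nonneg (fun y => sq_nonneg y)
  have hK2n : 0 ≤ K2 := integral_nonneg (fun y => abs_nonneg y)
  set K : ℝ := K1 + K2 with hK
  have hKn : 0 ≤ K := by positivity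
  set C₁ : ℝ := Ma + Mb + K + 1 with hC₁
  have hMa : 0 ≤ Ma := le_trans (abs_nonneg _) (ha_bd 0 0 ⟨le_refl 0, hT.le⟩)
  have hMb : 0 ≤ Mb := le_trans (abs_nonneg _) (hb_bd 0 0 ⟨le_refl 0, hT.le⟩)
  have hC₁p : 0 < C₁ := by rw [hC₁]; linarith
  -- the key claim with the barrier
  have claim : ∀ ε : ℝ, 0 < ε → ∀ x : ℝ, ∀ t ∈ Icc (0:ℝ) T,
      0 ≤ v x t + ε * (bf x + C₁ * (t + 1)) * Real.exp (C₀ * t) := by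
    intro ε hε
    by_contra hcon
    push_neg at hcon
    obtain ⟨x₁, t₁, ht₁, hneg⟩ := hcon
    -- the perturbed function u
    set u : ℝ → ℝ → ℝ := fun x t => v x t + ε * (bf x + C₁ * (t + 1)) * Real.exp (C₀ * t)
      with hu
    -- u is positive outside a compact set
    set R : ℝ := max (m / ε) 1 with hR
    have hRpos : 0 < R := lt_of_lt_of_le one_pos (le_max_right _ _)
    have hout : ∀ x : ℝ, ∀ t ∈ Icc (0:ℝ) T, R ≤ |x| → 0 < u x t := by
      intro x t ht hx
      have hexp : 1 ≤ Real.exp (C₀ * t) := Real.one_le_exp (by nlinarith [ht.1])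
      have hbfx : |x| ≤ bf x := bf_ge_abs x
      have hC1t : C₁ ≤ C₁ * (t + 1) := by nlinarith [ht.1]
      have hvm : -m ≤ v x t := hv_lb x t ht
      have hmR : m ≤ ε * R := by
        rw [hR]
        rcases le_total m 0 with h|h
        · nlinarith [le_max_right (m/ε) (1:ℝ)]
        · have : m / ε ≤ max (m / ε) 1 := le_max_left _ _
          calc m = ε * (m / ε) := by field_simp
            _ ≤ ε * max (m / ε) 1 := by nlinarith
      have hfac : ε * R + ε * C₁ ≤ ε * (bf x + C₁ * (t + 1)) * Real.exp (C₀ * t) := by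
        have h1 : R + C₁ ≤ bf x + C₁ * (t + 1) := by nlinarith
        have h2 : 0 ≤ bf x + C₁ * (t+1) := by nlinarith [bf_pos x, ht.1]
        have h3 : ε * (R + C₁) ≤ ε * (bf x + C₁ * (t + 1)) :=
          mul_le_mul_of_nonneg_left h1 hε.le
        have h4 : ε * (bf x + C₁ * (t + 1)) * 1 ≤ ε * (bf x + C₁ * (t + 1)) * Real.exp (C₀ * t) :=
          mul_le_mul_of_nonneg_left hexp (mul_nonneg hε.le h2)
        nlinarith [h3, h4]
      have : 0 < ε * C₁ := by positivity
      simp only [hu]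
      nlinarith
    -- continuity of u
    have bf_cont : Continuous bf := by
      unfold bf; exact Real.continuous_sqrt.comp (by continuity)
    have hwC : Continuous (fun q : ℝ × ℝ => ε * (bf q.1 + C₁ * (q.2 + 1)) * Real.exp (C₀ * q.2)) :=
      (continuous_const.mul ((bf_cont.comp continuous_fst).add
        (continuous_const.mul (continuous_snd.add continuous_const)))).mul
        (Real.continuous_exp.comp (continuous_const.mul continuous_snd))
    have hU : ContinuousOn (fun q : ℝ × ℝ => u q.1 q.2) (univ ×ˢ Icc 0 T) := by
      simp only [hu]
      exact hv_cont.add hwC.continuousOn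
    -- x₁ is inside the ball
    have hux₁ : u x₁ t₁ < 0 := hneg
    have hx₁R : x₁ ∈ Icc (-R) R := by
      by_contra hcon2
      have : R ≤ |x₁| := by
        simp only [mem_Icc, not_and_or, not_le] at hcon2
        rcases hcon2 with h|h
        · rw [abs_of_neg (by linarith)]; linarith
        · rw [abs_of_pos (by linarith)]; linarith
      linarith [hout x₁ t₁ ht₁ this]
    -- the closed set of nonpositivity and first touching time
    set C : Set (ℝ × ℝ) := (Icc (-R) R ×ˢ Icc (0:ℝ) T) ∩ {q : ℝ × ℝ | u q.1 q.2 ≤ 0}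
      with hCdef
    have hCcl : IsClosed C := by
      have : C = (Icc (-R) R ×ˢ Icc (0:ℝ) T) ∩
          ((fun q : ℝ × ℝ => u q.1 q.2) ⁻¹' Iic 0) := by
        ext q; simp [hCdef, mem_preimage]
      rw [this]
      exact ContinuousOn.preimage_isClosed_of_isClosed
        (hU.mono (by intro q hq; exact ⟨trivial, hq.2⟩))
        (isClosed_Icc.prod isClosed_Icc) isClosed_Iic
    have hCcomp : IsCompact C :=
      (IsCompact.prod isCompact_Icc isCompact_Icc).of_isClosed_subset hCcl inter_subset_left
    set A : Set ℝ := Prod.snd '' C with hAdef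
    have hAcomp : IsCompact A := hCcomp.image continuous_snd
    have hAne : A.Nonempty := ⟨t₁, ⟨(x₁, t₁), ⟨⟨hx₁R, ht₁⟩, hux₁.le⟩, rfl⟩⟩
    set ts : ℝ := sInf A with hts
    have htsA : ts ∈ A := hAcomp.sInf_mem hAne
    obtain ⟨⟨xs, ts'⟩, hqC, hqeq⟩ := htsA
    have hts' : ts' = ts := hqeq
    subst hts'
    have hxsR : xs ∈ Icc (-R) R := hqC.1.1
    have htsT : ts ∈ Icc (0:ℝ) T := hqC.1.2
    have huxs : u xs ts ≤ 0 := hqC.2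
    -- u is positive at time 0
    have hzero : ∀ x : ℝ, 0 < u x 0 := by
      intro x
      have h0x := h0 x
      have := bf_pos x
      simp only [hu, mul_zero, Real.exp_zero]
      nlinarith
    have htspos : 0 < ts := by
      rcases lt_or_eq_of_le htsT.1 with h|h
      · exact h
      · exfalso; rw [← h] at huxs; linarith [hzero xs]
    -- u is positive strictly before ts
    have hprev : ∀ t ∈ Ico (0:ℝ) ts, ∀ x : ℝ, 0 < u x t := by
      intro t htI x
      have htT : t ∈ Icc (0:ℝ) T := ⟨htI.1, le_trans htI.2.le htsT.2⟩
      rcases le_or_gt R |x| with h|h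
      · exact hout x t htT h
      · by_contra hcon2
        push_neg at hcon2
        have hxI : x ∈ Icc (-R) R := abs_le.1 h.le
        have htA : t ∈ A := ⟨(x, t), ⟨⟨hxI, htT⟩, hcon2⟩, rfl⟩
        have : ts ≤ t := csInf_le hAcomp.bddBelow htA
        linarith [htI.2]
    -- u is nonnegative at time ts
    have hmin0 : ∀ x : ℝ, 0 ≤ u x ts := by
      intro x
      have hcw : ContinuousWithinAt (fun t => u x t) (Ico 0 ts) ts := by
        have h3 : ContinuousOn (fun t => u x t) (Icc 0 T) := by
          have := hU.comp (Continuous.continuousOn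
            (Continuous.prodMk continuous_const continuous_id :
            Continuous (fun t : ℝ => ((x : ℝ), t))))
            (fun t (htc : t ∈ Icc (0:ℝ) T) => by simp [htc])
          exact this
        exact (h3 ts htsT).mono (fun z hz => ⟨hz.1, le_trans hz.2.le htsT.2⟩)
      have hne : (𝓝[Ico (0:ℝ) ts] ts).NeBot := by
        rw [← mem_closure_iff_nhdsWithin_neBot, closure_Ico htspos.ne]
        exact ⟨htspos.le, le_refl ts⟩
      exact ge_of_tendsto hcw (eventually_nhdsWithin_of_forall
        (fun t htI => (hprev t htI x).le))
    have huz : u xs ts = 0 := le_antisymm huxs (hmin0 xs)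
    have htsIoc : ts ∈ Ioc (0:ℝ) T := ⟨htspos, htsT.2⟩
    have humin : ∀ z : ℝ, u xs ts ≤ u z ts := fun z => le_trans (le_of_eq huz) (hmin0 z)
    -- spatial derivative facts
    have hUx : ∀ z : ℝ, HasDerivAt (fun z => u z ts)
        (vx z ts + ε * bf' z * Real.exp (C₀ * ts)) z := by
      intro z
      have h1' : HasDerivAt (fun z : ℝ => ε * (bf z + C₁ * (ts + 1)) * Real.exp (C₀ * ts))
          (ε * bf' z * Real.exp (C₀ * ts)) z :=
        (((bf_hasDeriv z).add_const (C₁ * (ts + 1))).const_mul ε).mul_const _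
      exact (hvx z ts htsIoc).add h1'
    have hux0 : vx xs ts + ε * bf' xs * Real.exp (C₀ * ts) = 0 := by
      have hloc : IsLocalMin (fun z => u z ts) xs :=
        Filter.Eventually.of_forall humin
      exact hloc.hasDerivAt_eq_zero (hUx xs)
    have huxx : 0 ≤ vxx xs ts + ε * bf'' xs * Real.exp (C₀ * ts) := by
      refine second_deriv_nonneg_of_min (g := fun z => u z ts)
        (g' := fun z => vx z ts + ε * bf' z * Real.exp (C₀ * ts)) hUx
        ((hvxx xs ts htsIoc).add (((bf'_hasDeriv xs).const_mul ε).mul_const _))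
        humin hux0
    -- time derivative fact
    have hut : vt xs ts + (ε * C₁ * Real.exp (C₀ * ts) +
        ε * (bf xs + C₁ * (ts + 1)) * (Real.exp (C₀ * ts) * C₀)) ≤ 0 := by
      refine deriv_nonpos_of_min_right (g := fun t => u xs t) htspos ?_ ?_
      · have h1' : HasDerivAt (fun t : ℝ => ε * (bf xs + C₁ * (t + 1)))
            (ε * C₁) ts := by
          have := ((((hasDerivAt_id ts).add_const 1).const_mul C₁).const_add (bf xs)).const_mul ε
          exact this.congr_deriv (by ring)
        have h2' : HasDerivAt (fun t : ℝ => Real.exp (C₀ * t))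
            (Real.exp (C₀ * ts) * C₀) ts := by
          have := ((hasDerivAt_id ts).const_mul C₀).exp
          exact this.congr_deriv (by simp only [id, mul_one])
        have h4' := (hvt xs ts htsIoc).add (h1'.mul h2')
        simp only [hu]
        exact h4'
        try ring
      · intro t htI
        calc (fun t => u xs t) ts = 0 := huz
          _ ≤ u xs t := (hprev t htI xs).le
    have hEpos : 0 < Real.exp (C₀ * ts) := Real.exp_pos _
    have huz' : v xs ts + ε * (bf xs + C₁ * (ts + 1)) * Real.exp (C₀ * ts) = 0 := by
      have := huz; simp only [hu] at this; exact this
    -- the integrands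
    set vI : ℝ → ℝ := fun y =>
      v (xs + y) ts - v xs ts - (if |y| ≤ 1 then y * vx xs ts else 0) with hvI
    set wI : ℝ → ℝ := fun y =>
      ε * Real.exp (C₀ * ts) * (bf (xs + y) - bf xs - (if |y| ≤ 1 then y * bf' xs else 0))
      with hwI
    have hsum : ∀ y : ℝ, vI y + wI y = u (xs + y) ts := by
      intro y
      simp only [hvI, hwI, hu]
      by_cases hy : |y| ≤ 1
      · simp only [if_pos hy]
        linear_combination (-1 : ℝ) * huz' - y * hux0
      · simp only [if_neg hy]
        linear_combination (-1 : ℝ) * huz'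
    have hnn : ∀ y : ℝ, 0 ≤ vI y + wI y := fun y => (hsum y) ▸ hmin0 (xs + y)
    set G : ℝ → ℝ := fun y => ε * Real.exp (C₀ * ts) * (if |y| ≤ 1 then y ^ 2 else |y|)
      with hG
    have hGint : Integrable G ν := by
      rw [← integrableOn_univ]
      have huniv : (univ : Set ℝ) = {y : ℝ | |y| ≤ 1} ∪ {y : ℝ | 1 < |y|} := by
        ext y; simp [le_or_gt]
      rw [huniv]
      refine IntegrableOn.union ?_ ?_
      · refine IntegrableOn.congr_fun (h1.const_mul (ε * Real.exp (C₀ * ts))) ?_ hs1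
        intro y hy
        have hy' : |y| ≤ 1 := hy
        simp only [hG]
        rw [if_pos hy']
      · refine IntegrableOn.congr_fun (h2.const_mul (ε * Real.exp (C₀ * ts))) ?_ hs2
        intro y hy
        have hy' : (1:ℝ) < |y| := hy
        simp only [hG]
        rw [if_neg (not_le.2 hy')]
    have hwIb : ∀ y : ℝ, ‖wI y‖ ≤ G y := by
      intro y
      simp only [hwI, hG, Real.norm_eq_abs]
      rw [abs_mul, abs_of_pos (by positivity : (0:ℝ) < ε * Real.exp (C₀ * ts))]
      by_cases hy : |y| ≤ 1
      · rw [if_pos hy, if_pos hy]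
        exact mul_le_mul_of_nonneg_left (bf_taylor xs y) (by positivity)
      · rw [if_neg hy, if_neg hy, sub_zero]
        refine mul_le_mul_of_nonneg_left ?_ (by positivity)
        have := bf_lip (xs + y) xs
        simpa using this
    have hwImeas : AEStronglyMeasurable wI ν := by
      have : Measurable (fun y : ℝ =>
          bf (xs + y) - bf xs - (if |y| ≤ 1 then y * bf' xs else 0)) :=
        ((bf_cont.comp (continuous_const.add continuous_id)).measurable.sub
          measurable_const).sub
          (Measurable.ite hs1 (measurable_id.mul_const _) measurable_const)
      exact (this.const_mul _).aestronglyMeasurable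
    have hwint : Integrable wI ν :=
      hGint.mono' hwImeas (Filter.Eventually.of_forall hwIb)
    have hGval : ∫ y, G y ∂ν = ε * Real.exp (C₀ * ts) * K := by
      rw [← integral_add_compl hs1 hGint, hs2c]
      have e1 : ∫ y in {y : ℝ | |y| ≤ 1}, G y ∂ν
          = ε * Real.exp (C₀ * ts) * K1 := by
        rw [setIntegral_congr_fun hs1 (fun y (hy : |y| ≤ 1) => by
          simp only [hG]; rw [if_pos hy] :
          EqOn G (fun y => ε * Real.exp (C₀ * ts) * y ^ 2) {y : ℝ | |y| ≤ 1}), hK1]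
        exact integral_const_mul _ _
      have e2 : ∫ y in {y : ℝ | 1 < |y|}, G y ∂ν
          = ε * Real.exp (C₀ * ts) * K2 := by
        rw [setIntegral_congr_fun hs2 (fun y (hy : 1 < |y|) => by
          simp only [hG]; rw [if_neg (not_le.2 hy)] :
          EqOn G (fun y => ε * Real.exp (C₀ * ts) * |y|) {y : ℝ | 1 < |y|}), hK2]
        exact integral_const_mul _ _
      rw [e1, e2, hK]
      ring
    have hJ : -(ε * Real.exp (C₀ * ts) * K) ≤ ∫ y, vI y ∂ν := by
      by_cases hvint : Integrable vI ν
      · have hsplit : ∫ y, vI y ∂ν = (∫ y, (vI y + wI y) ∂ν) - ∫ y, wI y ∂ν := by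
          rw [integral_add hvint hwint]
          ring
        have h5 : 0 ≤ ∫ y, (vI y + wI y) ∂ν := integral_nonneg hnn
        have h6 : ∫ y, wI y ∂ν ≤ ∫ y, G y ∂ν :=
          integral_mono hwint hGint (fun y => le_trans (le_abs_self _) (hwIb y))
        rw [hGval] at h6
        rw [hsplit]
        linarith
      · rw [integral_undef hvint]
        have : 0 ≤ ε * Real.exp (C₀ * ts) * K :=
          mul_nonneg (by positivity) hKn
        linarith
    -- final contradiction
    have hfin := hineq xs ts htsIoc
    rw [← hvI] at hfin
    have haA := ha_bd xs ts htsT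
    have haP := ha_pos xs ts htsT
    have hbB := hb_bd xs ts htsT
    have hcB := hc_lb xs ts htsT
    have hbfxs := bf_pos xs
    have hW : 0 ≤ ε * (bf xs + C₁ * (ts + 1)) * Real.exp (C₀ * ts) := by
      have h9 : 0 ≤ bf xs + C₁ * (ts + 1) := by nlinarith [htsT.1, hC₁p]
      positivity
    have hvval : v xs ts = -(ε * (bf xs + C₁ * (ts + 1)) * Real.exp (C₀ * ts)) := by
      linarith only [huz']
    have hvxval : vx xs ts = -(ε * bf' xs * Real.exp (C₀ * ts)) := by
      linarith only [hux0]
    -- bound the second-order term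
    have h7 : 0 ≤ a xs ts * (vxx xs ts + ε * bf'' xs * Real.exp (C₀ * ts)) :=
      mul_nonneg haP.le huxx
    have habf : a xs ts * bf'' xs ≤ Ma := by
      nlinarith [(abs_le.1 haA).2, (bf''_bounds xs).1, (bf''_bounds xs).2, haP]
    have h8 : a xs ts * (ε * bf'' xs * Real.exp (C₀ * ts))
        ≤ Ma * (ε * Real.exp (C₀ * ts)) := by
      linarith only [mul_le_mul_of_nonneg_right habf (mul_pos hε hEpos).le]
    have h_axx : -(a xs ts * vxx xs ts) ≤ Ma * (ε * Real.exp (C₀ * ts)) := by linarith only [h7, h8]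
    -- bound the first-order term
    have hbbf : b xs ts * bf' xs ≤ Mb := by
      calc b xs ts * bf' xs ≤ |b xs ts * bf' xs| := le_abs_self _
        _ = |b xs ts| * |bf' xs| := abs_mul _ _
        _ ≤ Mb * 1 := mul_le_mul hbB (bf'_abs_le xs) (abs_nonneg _) hMb
        _ = Mb := mul_one _
    have h_bvx : -(b xs ts * vx xs ts) ≤ Mb * (ε * Real.exp (C₀ * ts)) := by
      rw [hvxval]
      linarith only [mul_le_mul_of_nonneg_right hbbf (mul_pos hε hEpos).le]
    -- bound the zeroth-order term
    have h_cv : c xs ts * v xs ts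
        ≤ C₀ * (ε * (bf xs + C₁ * (ts + 1)) * Real.exp (C₀ * ts)) := by
      rw [hvval]
      linarith only [mul_nonneg (by linarith only [hcB] : (0:ℝ) ≤ c xs ts + C₀) hW]
    have h_vt : vt xs ts ≤ -(ε * C₁ * Real.exp (C₀ * ts))
        - ε * (bf xs + C₁ * (ts + 1)) * (Real.exp (C₀ * ts) * C₀) := by linarith only [hut]
    have hC₁E : ε * C₁ * Real.exp (C₀ * ts)
        = ε * Ma * Real.exp (C₀ * ts) + ε * Mb * Real.exp (C₀ * ts)
          + ε * K * Real.exp (C₀ * ts) + ε * Real.exp (C₀ * ts) := by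
      rw [hC₁]
      ring
    have hEK : 0 < ε * Real.exp (C₀ * ts) := mul_pos hε hEpos
    linarith only [hfin, h_vt, h_axx, h_bvx, hJ, h_cv, hC₁E, hEK]

  -- conclude from the claim
  intro x t ht
  by_contra hneg
  push_neg at hneg
  have hb := bf_pos x
  have hx0 : 0 < bf x + C₁ * (t + 1) := by nlinarith [ht.1, hC₁p]
  have hP : 0 < (bf x + C₁ * (t + 1)) * Real.exp (C₀ * t) := mul_pos hx0 (Real.exp_pos _)
  have hnv : 0 < -v x t := by linarith
  have hε : 0 < -v x t / (2 * ((bf x + C₁ * (t + 1)) * Real.exp (C₀ * t))) :=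
    div_pos hnv (by positivity)
  have hcl := claim _ hε x t ht
  have key : v x t + -v x t / (2 * ((bf x + C₁ * (t + 1)) * Real.exp (C₀ * t)))
      * (bf x + C₁ * (t + 1)) * Real.exp (C₀ * t) = v x t / 2 := by
    field_simp
    ring
  rw [key] at hcl
  linarith
end

section
/- Comparison/uniqueness via the mean value theorem and maximum principle: Let a, b, r satisfy the conditions of the maximum principle (a > 0 bounded, b bounded, r ≥ 0 bounded) and ν a Lévy measure with ∫_{|y|≤1} y² ν(dy) < ∞, ∫_{|y|>1}|y| ν(dy) < ∞. Let p : ℝ → ℝ be C¹ with p' ≥ 0 everywhere, and g : ℝ → ℝ a fixed function. If v₁ and v₂ are bounded classical (C^{2,1} ∩ C⁰) solutions on ℝ × [0,T] of ∂_t v − a ∂²_{xx} v − b ∂_x v − I v + r v + p(v − g) = 0 with v₁(·,0) = v₂(·,0), then v₁ = v₂ on ℝ × [0,T]. -/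
open MeasureTheory Set

noncomputable def psifun (x : ℝ) : ℝ := Real.sqrt (1 + x ^ 2)
noncomputable def psid (x : ℝ) : ℝ := x / Real.sqrt (1 + x ^ 2)
noncomputable def psidd (x : ℝ) : ℝ := 1 / ((1 + x ^ 2) * Real.sqrt (1 + x ^ 2))

lemma psifun_sq (x : ℝ) : psifun x ^ 2 = 1 + x ^ 2 :=
  Real.sq_sqrt (by positivity)

lemma one_le_psifun (x : ℝ) : 1 ≤ psifun x := by
  rw [show (1:ℝ) = Real.sqrt 1 by simp]
  exact Real.sqrt_le_sqrt (by nlinarith [sq_nonneg x])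

lemma psifun_pos (x : ℝ) : 0 < psifun x := lt_of_lt_of_le one_pos (one_le_psifun x)

lemma abs_le_psifun (x : ℝ) : |x| ≤ psifun x := by
  rw [← Real.sqrt_sq_eq_abs]
  exact Real.sqrt_le_sqrt (by nlinarith)

lemma continuous_psifun : Continuous psifun :=
  Real.continuous_sqrt.comp (continuous_const.add (continuous_pow 2))

lemma psifun_add_le (x y : ℝ) : psifun (x + y) ≤ psifun x + |y| := by
  have h0 : (0:ℝ) ≤ psifun x + |y| := add_nonneg (psifun_pos x).le (abs_nonneg y)
  have hxy : x * y ≤ psifun x * |y| := by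
    calc x * y ≤ |x * y| := le_abs_self _
      _ = |x| * |y| := abs_mul x y
      _ ≤ psifun x * |y| := mul_le_mul_of_nonneg_right (abs_le_psifun x) (abs_nonneg y)
  calc psifun (x + y) = Real.sqrt (1 + (x + y) ^ 2) := rfl
    _ ≤ Real.sqrt ((psifun x + |y|) ^ 2) := by
        apply Real.sqrt_le_sqrt
        nlinarith [psifun_sq x, sq_abs y]
    _ = psifun x + |y| := Real.sqrt_sq h0

lemma psifun_lip (x y : ℝ) : |psifun (x + y) - psifun x| ≤ |y| := by
  rw [abs_le]
  constructor
  · have := psifun_add_le (x + y) (-y)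
    simp only [add_neg_cancel_right, abs_neg] at this
    linarith
  · linarith [psifun_add_le x y]

lemma psifun_cs (x y : ℝ) : 1 + x * (x + y) ≤ psifun x * psifun (x + y) := by
  have hpos : (0:ℝ) ≤ psifun x * psifun (x + y) :=
    mul_nonneg (psifun_pos x).le (psifun_pos (x + y)).le
  have h : (1 + x * (x + y)) ^ 2 ≤ (psifun x * psifun (x + y)) ^ 2 := by
    rw [mul_pow, psifun_sq, psifun_sq]
    nlinarith [sq_nonneg (x - (x + y))]
  calc 1 + x * (x + y) ≤ |1 + x * (x + y)| := le_abs_self _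
    _ = Real.sqrt ((1 + x * (x + y)) ^ 2) := (Real.sqrt_sq_eq_abs _).symm
    _ ≤ Real.sqrt ((psifun x * psifun (x + y)) ^ 2) := Real.sqrt_le_sqrt h
    _ = psifun x * psifun (x + y) := Real.sqrt_sq hpos

lemma psid_eq (x : ℝ) : psid x = x / psifun x := rfl

lemma abs_psid_le_one (x : ℝ) : |psid x| ≤ 1 := by
  rw [psid_eq, abs_div, abs_of_pos (psifun_pos x)]
  rw [div_le_one (psifun_pos x)]
  exact abs_le_psifun x

lemma psifun_taylor_nonneg (x y : ℝ) : 0 ≤ psifun (x + y) - psifun x - y * psid x := by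
  have hS := psifun_pos x
  have heq : y * psid x = y * x / psifun x := by rw [psid_eq]; ring
  have h : y * x / psifun x ≤ psifun (x + y) - psifun x := by
    rw [div_le_iff₀ hS]
    nlinarith [psifun_cs x y, psifun_sq x]
  linarith [heq.le, heq.ge]

lemma psifun_taylor_le (x y : ℝ) : psifun (x + y) - psifun x - y * psid x ≤ y ^ 2 := by
  have hS := psifun_pos x
  have hU := psifun_pos (x + y)
  have hS2 := psifun_sq x
  have hU2' : psifun (x + y) ^ 2 = psifun x ^ 2 + 2 * x * y + y ^ 2 := by
    rw [psifun_sq, psifun_sq]; ring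
  have hlip : |psifun (x + y) - psifun x| ≤ |y| := psifun_lip x y
  have hxS : |x| ≤ psifun x := abs_le_psifun x
  set S := psifun x
  set U := psifun (x + y)
  have hmain : (U * S - S ^ 2 - y * x) * (U + S) = x * y * (S - U) + y ^ 2 * S := by
    linear_combination S * hU2'
  have habs : x * y * (S - U) ≤ y ^ 2 * S := by
    calc x * y * (S - U) ≤ |x * y * (S - U)| := le_abs_self _
      _ = |x| * |y| * |S - U| := by rw [abs_mul, abs_mul]
      _ ≤ S * |y| * |y| := by
          apply mul_le_mul (mul_le_mul_of_nonneg_right hxS (abs_nonneg y))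
          · rw [abs_sub_comm]; exact hlip
          · exact abs_nonneg _
          · exact mul_nonneg hS.le (abs_nonneg y)
      _ = y ^ 2 * S := by rw [← sq_abs y]; ring
  have hUS2 : 2 ≤ U + S := by linarith [one_le_psifun x, one_le_psifun (x + y)]
  have hy2S : 0 ≤ y ^ 2 * S := mul_nonneg (sq_nonneg y) hS.le
  have h3 : (U * S - S ^ 2 - y * x) * (U + S) ≤ (y ^ 2 * S) * (U + S) := by nlinarith
  have hkey : U * S - S ^ 2 - y * x ≤ y ^ 2 * S := le_of_mul_le_mul_right h3 (by linarith)
  have heq : y * psid x = y * x / S := by rw [psid_eq]; ring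
  have hfrac : U - S - y * x / S = (U * S - S ^ 2 - y * x) / S := by field_simp
  have : U - S - y * x / S ≤ y ^ 2 := by
    rw [hfrac, div_le_iff₀ hS]; linarith
  linarith [heq.le, heq.ge]

lemma hasDerivAt_psifun (x : ℝ) : HasDerivAt psifun (psid x) x := by
  have h1 : HasDerivAt (fun x : ℝ => 1 + x ^ 2) (2 * x) x := by
    simpa using ((hasDerivAt_pow 2 x).const_add 1)
  have h2 := h1.sqrt (by positivity : (1:ℝ) + x ^ 2 ≠ 0)
  refine h2.congr_deriv (Eq.symm ?_)
  rw [psid_eq]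
  have hne : psifun x ≠ 0 := (psifun_pos x).ne'
  show x / psifun x = 2 * x / (2 * psifun x)
  field_simp

lemma hasDerivAt_psid (x : ℝ) : HasDerivAt psid (psidd x) x := by
  have hS := psifun_pos x
  have h := (hasDerivAt_id x).div (hasDerivAt_psifun x) hS.ne'
  have hfun : psid = fun y => y / psifun y := by funext y; rw [psid_eq]
  rw [hfun]
  refine h.congr_deriv (Eq.symm ?_)
  have hS2 := psifun_sq x
  show psidd x = (1 * psifun x - x * psid x) / psifun x ^ 2
  rw [psid_eq]
  show (1 : ℝ) / ((1 + x ^ 2) * psifun x) = (1 * psifun x - x * (x / psifun x)) / psifun x ^ 2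
  field_simp
  linear_combination (-x ^ 2) * hS2

lemma psidd_nonneg (x : ℝ) : 0 ≤ psidd x := by
  unfold psidd
  positivity

lemma psidd_le_one (x : ℝ) : psidd x ≤ 1 := by
  have h : (1:ℝ) ≤ Real.sqrt (1 + x ^ 2) := one_le_psifun x
  unfold psidd
  rw [div_le_one (by positivity)]
  nlinarith [sq_nonneg x]

lemma integrable_ite_bound (ν : Measure ℝ)
    (h1 : IntegrableOn (fun y => y ^ 2) {y : ℝ | |y| ≤ 1} ν)
    (h2 : IntegrableOn (fun y => |y|) {y : ℝ | 1 < |y|} ν) (c₁ c₂ : ℝ) :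
    Integrable (fun y => if |y| ≤ 1 then c₁ * y ^ 2 else c₂ * |y|) ν := by
  have hm1 : MeasurableSet {y : ℝ | |y| ≤ 1} := measurableSet_le measurable_abs measurable_const
  have hm2 : MeasurableSet {y : ℝ | 1 < |y|} := measurableSet_lt measurable_const measurable_abs
  rw [← integrableOn_univ]
  have hsplit : (univ : Set ℝ) = {y : ℝ | |y| ≤ 1} ∪ {y : ℝ | 1 < |y|} := by
    ext y; simp [le_or_gt]
  rw [hsplit]
  apply IntegrableOn.union
  · exact IntegrableOn.congr_fun (h1.const_mul c₁) (fun y (hy : |y| ≤ 1) => by simp [hy]) hm1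
  · exact IntegrableOn.congr_fun (h2.const_mul c₂)
      (fun y (hy : 1 < |y|) => by simp [not_le.mpr hy]) hm2

lemma integrand_aesm (ν : Measure ℝ) (f : ℝ → ℝ) (hf : Continuous f) (c : ℝ) :
    AEStronglyMeasurable (fun y => f y - if |y| ≤ 1 then y * c else 0) ν := by
  apply Measurable.aestronglyMeasurable
  exact hf.measurable.sub
    (Measurable.ite (measurableSet_le measurable_abs measurable_const)
      (measurable_id.mul_const c) measurable_const)

lemma integrand_integrable (T : ℝ) (ν : Measure ℝ)
    (h1 : IntegrableOn (fun y => y ^ 2) {y : ℝ | |y| ≤ 1} ν)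
    (h2 : IntegrableOn (fun y => |y|) {y : ℝ | 1 < |y|} ν)
    (v vx vxx : ℝ → ℝ → ℝ) (M : ℝ)
    (hbd : ∀ x : ℝ, ∀ t ∈ Icc (0:ℝ) T, |v x t| ≤ M)
    (hvx : ∀ x : ℝ, ∀ t ∈ Ioc (0:ℝ) T, HasDerivAt (fun z => v z t) (vx x t) x)
    (hvxx : ∀ x : ℝ, ∀ t ∈ Ioc (0:ℝ) T, HasDerivAt (fun z => vx z t) (vxx x t) x)
    (x t : ℝ) (ht : t ∈ Ioc (0:ℝ) T) :
    Integrable (fun y => v (x + y) t - v x t - if |y| ≤ 1 then y * vx x t else 0) ν := by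
  have htIcc : t ∈ Icc (0:ℝ) T := Ioc_subset_Icc_self ht
  have hdiff : ∀ z, HasDerivAt (fun z => v z t) (vx z t) z := fun z => hvx z t ht
  have hcont : Continuous (fun z => v z t) := by
    have hd : Differentiable ℝ (fun z => v z t) := fun z => (hdiff z).differentiableAt
    exact hd.continuous
  set c := vx x t with hc
  set R : ℝ → ℝ := fun y => v (x + y) t - v x t - y * c with hRdef
  have hRd : ∀ s : ℝ, HasDerivAt R (vx (x + s) t - c) s := by
    intro s
    have h₁ : HasDerivAt (fun y : ℝ => v (x + y) t) (vx (x + s) t) s := by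
      have := (hdiff (x + s)).comp s ((hasDerivAt_id s).const_add x)
      exact this.congr_deriv (mul_one _)
    exact ((h₁.sub_const (v x t)).sub ((hasDerivAt_id s).mul_const c)).congr_deriv (by simp)
  have hRcont : Continuous R := by
    have hd : Differentiable ℝ R := fun s => (hRd s).differentiableAt
    exact hd.continuous
  have hR0 : R 0 = 0 := by simp [hRdef]
  set L := |vxx x t| + 1 with hL
  have hLpos : 0 < L := by positivity
  have hφ : HasDerivAt (fun s => vx (x + s) t) (vxx x t) 0 := by
    have := (hvxx (x + 0) t ht).comp (0:ℝ) ((hasDerivAt_id (0:ℝ)).const_add x)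
    exact this.congr_deriv (by simp)
  have hev : ∀ᶠ s in nhdsWithin (0:ℝ) {(0:ℝ)}ᶜ, |vx (x + s) t - c| ≤ L * |s| := by
    have htend := hasDerivAt_iff_tendsto_slope.1 hφ
    have hnbd : ∀ᶠ u in nhds (vxx x t), |u| < L := by
      have : Ioo (-L) L ∈ nhds (vxx x t) :=
        Ioo_mem_nhds (by cases abs_cases (vxx x t) <;> simp [hL] <;> linarith)
          (by cases abs_cases (vxx x t) <;> simp [hL] <;> linarith)
      filter_upwards [this] with u hu
      rw [abs_lt]; exact ⟨hu.1, hu.2⟩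
    filter_upwards [htend.eventually hnbd, self_mem_nhdsWithin] with s hs hs0
    have hs0' : s ≠ 0 := hs0
    rw [slope_def_field] at hs
    have : |(vx (x + s) t - vx (x + 0) t) / (s - 0)| < L := abs_lt.mpr (abs_lt.mp hs)
    rw [sub_zero, add_zero, abs_div] at this
    have habs : 0 < |s| := abs_pos.mpr hs0'
    calc |vx (x + s) t - c| = |vx (x + s) t - c| / |s| * |s| := by field_simp
      _ ≤ L * |s| := mul_le_mul_of_nonneg_right (le_of_lt (by rw [hc]; exact this))
            (abs_nonneg s)
  obtain ⟨δ, hδpos, hδ⟩ : ∃ δ > 0, ∀ s : ℝ, s ≠ 0 → dist s 0 < δ →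
      |vx (x + s) t - c| ≤ L * |s| := by
    rcases Metric.mem_nhdsWithin_iff.1 hev with ⟨δ, hδpos, hsub⟩
    exact ⟨δ, hδpos, fun s hs hd => hsub ⟨Metric.mem_ball.mpr hd, hs⟩⟩
  have hquad : ∀ y : ℝ, |y| < δ → |R y| ≤ L * y ^ 2 := by
    intro y hy
    have hmem0 : (0:ℝ) ∈ Icc (min 0 y) (max 0 y) := ⟨min_le_left _ _, le_max_left _ _⟩
    have hmemy : y ∈ Icc (min 0 y) (max 0 y) := ⟨min_le_right _ _, le_max_right _ _⟩
    have hbd' : ∀ z ∈ Icc (min 0 y) (max 0 y), ‖vx (x + z) t - c‖ ≤ L * |y| := by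
      intro z hz
      have hzy : |z| ≤ |y| := by
        rw [abs_le]
        constructor
        · have hmin : -|y| ≤ min 0 y :=
            le_min (neg_nonpos.mpr (abs_nonneg y)) (neg_abs_le y)
          linarith [hz.1]
        · exact le_trans hz.2 (max_le (abs_nonneg y) (le_abs_self y))
      by_cases hz0 : z = 0
      · subst hz0
        simp only [add_zero, Real.norm_eq_abs, ← hc, sub_self, abs_zero]
        positivity
      · have := hδ z hz0 (by rw [Real.dist_eq, sub_zero]; exact lt_of_le_of_lt hzy hy)
        rw [Real.norm_eq_abs]
        exact le_trans this (mul_le_mul_of_nonneg_left hzy hLpos.le)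
    have hmvt := Convex.norm_image_sub_le_of_norm_hasDerivWithin_le
      (f' := fun z => vx (x + z) t - c)
      (fun z _ => (hRd z).hasDerivWithinAt) hbd' (convex_Icc _ _) hmem0 hmemy
    rw [hR0, sub_zero, sub_zero, Real.norm_eq_abs, Real.norm_eq_abs] at hmvt
    calc |R y| ≤ L * |y| * |y| := hmvt
      _ = L * y ^ 2 := by rw [← sq_abs y]; ring
  obtain ⟨B, hB⟩ := (isCompact_Icc : IsCompact (Icc (-1:ℝ) 1)).exists_bound_of_continuousOn
    hRcont.continuousOn
  have hB0 : 0 ≤ B := le_trans (norm_nonneg (R 0)) (hB 0 (by norm_num))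
  set C₁ := max L (B / δ ^ 2) with hC₁
  have hbound : ∀ y : ℝ,
      ‖v (x + y) t - v x t - (if |y| ≤ 1 then y * vx x t else 0)‖ ≤
        if |y| ≤ 1 then C₁ * y ^ 2 else (2 * M) * |y| := by
    intro y
    rw [Real.norm_eq_abs]
    by_cases hy1 : |y| ≤ 1
    · simp only [if_pos hy1]
      have hRy : v (x + y) t - v x t - y * vx x t = R y := by rw [hRdef]
      rw [hRy]
      by_cases hyδ : |y| < δ
      · exact le_trans (hquad y hyδ)
          (mul_le_mul_of_nonneg_right (le_max_left _ _) (sq_nonneg y))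
      · have hy2 : δ ≤ |y| := not_lt.1 hyδ
        have hmem : y ∈ Icc (-1:ℝ) 1 := ⟨(abs_le.1 hy1).1, (abs_le.1 hy1).2⟩
        have h1' : |R y| ≤ B := by rw [← Real.norm_eq_abs]; exact hB y hmem
        have hyδ2 : δ ^ 2 ≤ y ^ 2 := by nlinarith [abs_nonneg y, sq_abs y]
        calc |R y| ≤ B := h1'
          _ = (B / δ ^ 2) * δ ^ 2 := by field_simp
          _ ≤ (B / δ ^ 2) * y ^ 2 :=
              mul_le_mul_of_nonneg_left hyδ2 (div_nonneg hB0 (sq_nonneg δ))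
          _ ≤ C₁ * y ^ 2 :=
              mul_le_mul_of_nonneg_right (le_max_right _ _) (sq_nonneg y)
    · simp only [if_neg hy1, sub_zero]
      have h1' := hbd (x + y) t htIcc
      have h2' := hbd x t htIcc
      have hM0 : 0 ≤ M := le_trans (abs_nonneg _) h2'
      have hy1' : 1 < |y| := not_le.1 hy1
      calc |v (x + y) t - v x t| ≤ |v (x + y) t| + |v x t| := abs_sub _ _
        _ ≤ 2 * M := by linarith
        _ ≤ (2 * M) * |y| := by nlinarith
  apply Integrable.mono' (integrable_ite_bound ν h1 h2 C₁ (2 * M))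
  · exact integrand_aesm ν (fun y => v (x + y) t - v x t)
      ((hcont.comp (continuous_const.add continuous_id)).sub continuous_const) (vx x t)
  · exact ae_of_all _ hbound
set_option maxHeartbeats 1000000 in
lemma maxprin (T : ℝ) (hT : 0 < T)
    (a b : ℝ → ℝ → ℝ) (Ma Mb : ℝ)
    (ha_pos : ∀ x : ℝ, ∀ t ∈ Icc (0:ℝ) T, 0 < a x t)
    (ha_bd : ∀ x : ℝ, ∀ t ∈ Icc (0:ℝ) T, |a x t| ≤ Ma)
    (hb_bd : ∀ x : ℝ, ∀ t ∈ Icc (0:ℝ) T, |b x t| ≤ Mb)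
    (ν : Measure ℝ)
    (h1 : IntegrableOn (fun y => y ^ 2) {y : ℝ | |y| ≤ 1} ν)
    (h2 : IntegrableOn (fun y => |y|) {y : ℝ | 1 < |y|} ν)
    (w wt wx wxx : ℝ → ℝ → ℝ)
    (hcw : ContinuousOn (fun q : ℝ × ℝ => w q.1 q.2) (univ ×ˢ Icc 0 T))
    (M : ℝ) (hM : ∀ x : ℝ, ∀ t ∈ Icc (0:ℝ) T, w x t ≤ M)
    (hw0 : ∀ x : ℝ, w x 0 ≤ 0)
    (hwt : ∀ x : ℝ, ∀ t ∈ Ioc (0:ℝ) T, HasDerivAt (fun s => w x s) (wt x t) t)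
    (hwx : ∀ x : ℝ, ∀ t ∈ Ioc (0:ℝ) T, HasDerivAt (fun z => w z t) (wx x t) x)
    (hwxx : ∀ x : ℝ, ∀ t ∈ Ioc (0:ℝ) T, HasDerivAt (fun z => wx z t) (wxx x t) x)
    (hint : ∀ x : ℝ, ∀ t ∈ Ioc (0:ℝ) T, Integrable
      (fun y => w (x + y) t - w x t - if |y| ≤ 1 then y * wx x t else 0) ν)
    (hineq : ∀ x : ℝ, ∀ t ∈ Ioc (0:ℝ) T, 0 < w x t →
      wt x t ≤ a x t * wxx x t + b x t * wx x t +
        ∫ y, (w (x + y) t - w x t - if |y| ≤ 1 then y * wx x t else 0) ∂ν) :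
    ∀ x : ℝ, ∀ t ∈ Icc (0:ℝ) T, w x t ≤ 0 := by
  have hMa0 : 0 ≤ Ma := le_trans (abs_nonneg _) (ha_bd 0 T ⟨hT.le, le_rfl⟩)
  have hMb0 : 0 ≤ Mb := le_trans (abs_nonneg _) (hb_bd 0 T ⟨hT.le, le_rfl⟩)
  have hD : Integrable (fun y : ℝ => if |y| ≤ 1 then 1 * y ^ 2 else 1 * |y|) ν :=
    integrable_ite_bound ν h1 h2 1 1
  set C₀ : ℝ := ∫ y, (if |y| ≤ 1 then 1 * y ^ 2 else 1 * |y|) ∂ν with hC₀def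
  have hC₀0 : 0 ≤ C₀ := by
    apply integral_nonneg
    intro y
    by_cases hy : |y| ≤ 1 <;> simp [hy] <;> positivity
  set K : ℝ := Ma + Mb + C₀ + 1 with hKdef
  have hK : 0 < K := by positivity
  -- main claim, for every ε > 0
  have hmain : ∀ ε > 0, ∀ x : ℝ, ∀ t ∈ Icc (0:ℝ) T, w x t ≤ ε * (psifun x + K * t) := by
    intro ε hε
    by_contra hcon
    push_neg at hcon
    obtain ⟨x₁, t₁, ht₁, hstar⟩ := hcon
    set u : ℝ → ℝ → ℝ := fun x t => w x t - ε * (psifun x + K * t) with hu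
    have hu₁pos : 0 < u x₁ t₁ := by simp only [hu]; linarith
    set R : ℝ := max |x₁| (M / ε) with hRdef
    have hR1 : |x₁| ≤ R := le_max_left _ _
    have hRM : M ≤ ε * R := by
      have : M / ε ≤ R := le_max_right _ _
      calc M = ε * (M / ε) := by field_simp
        _ ≤ ε * R := mul_le_mul_of_nonneg_left this hε.le
    -- compact maximum
    have hcomp : IsCompact (Icc (-R) R ×ˢ Icc (0:ℝ) T) := isCompact_Icc.prod isCompact_Icc
    have hconts : ContinuousOn (fun q : ℝ × ℝ => u q.1 q.2) (Icc (-R) R ×ˢ Icc (0:ℝ) T) := by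
      apply ContinuousOn.sub
      · exact hcw.mono (fun q hq => ⟨trivial, hq.2⟩)
      · exact (continuous_const.mul ((continuous_psifun.comp continuous_fst).add
          (continuous_const.mul continuous_snd))).continuousOn
    have hne : ((x₁, t₁) : ℝ × ℝ) ∈ Icc (-R) R ×ˢ Icc (0:ℝ) T :=
      ⟨⟨neg_le_of_abs_le hR1, le_of_abs_le hR1⟩, ht₁⟩
    obtain ⟨q₀, hq₀mem, hq₀max⟩ := hcomp.exists_isMaxOn ⟨(x₁, t₁), hne⟩ hconts
    set x₀ : ℝ := q₀.1 with hx₀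
    set t₀ : ℝ := q₀.2 with ht₀'
    have ht₀Icc : t₀ ∈ Icc (0:ℝ) T := hq₀mem.2
    have hmax' : ∀ q ∈ Icc (-R) R ×ˢ Icc (0:ℝ) T, u q.1 q.2 ≤ u x₀ t₀ :=
      fun q hq => isMaxOn_iff.mp hq₀max q hq
    have hu₀pos : 0 < u x₀ t₀ :=
      lt_of_lt_of_le hu₁pos (hmax' (x₁, t₁) hne)
    have hglobal : ∀ x : ℝ, ∀ t ∈ Icc (0:ℝ) T, u x t ≤ u x₀ t₀ := by
      intro x t htI
      by_cases hx : |x| ≤ R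
      · exact hmax' (x, t) ⟨⟨neg_le_of_abs_le hx, le_of_abs_le hx⟩, htI⟩
      · have hxR : R < |x| := not_le.1 hx
        have h1' : u x t ≤ 0 := by
          have hw' : w x t ≤ M := hM x t htI
          have hψ : |x| ≤ psifun x := abs_le_psifun x
          have hKt : 0 ≤ ε * (K * t) := by
            apply mul_nonneg hε.le (mul_nonneg hK.le htI.1)
          simp only [hu]
          nlinarith [mul_le_mul_of_nonneg_left (le_trans hxR.le hψ) hε.le]
        linarith
    have ht₀pos : 0 < t₀ := by
      rcases ht₀Icc.1.lt_or_eq with h | h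
      · exact h
      · exfalso
        have : u x₀ t₀ ≤ 0 := by
          simp only [hu, ← h]
          have := hw0 x₀
          nlinarith [one_le_psifun x₀]
        linarith
    have ht₀Ioc : t₀ ∈ Ioc (0:ℝ) T := ⟨ht₀pos, ht₀Icc.2⟩
    have hw₀pos : 0 < w x₀ t₀ := by
      have h0 : 0 ≤ ε * (psifun x₀ + K * t₀) := by
        apply mul_nonneg hε.le
        nlinarith [one_le_psifun x₀, mul_nonneg hK.le ht₀pos.le]
      have := hu₀pos
      simp only [hu] at this
      linarith
    -- time derivative
    have hUd : HasDerivAt (fun s => w x₀ s - ε * (psifun x₀ + K * s)) (wt x₀ t₀ - ε * K) t₀ := by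
      have h2' : HasDerivAt (fun s : ℝ => ε * (psifun x₀ + K * s)) (ε * K) t₀ := by
        have h3 : HasDerivAt (fun s : ℝ => psifun x₀ + K * s) K t₀ := by
          simpa using ((hasDerivAt_id t₀).const_mul K).const_add (psifun x₀)
        simpa using h3.const_mul ε
      exact (hwt x₀ t₀ ht₀Ioc).sub h2'
    have htime : ε * K ≤ wt x₀ t₀ := by
      have htend := hasDerivAt_iff_tendsto_slope.1 hUd
      have hmono : nhdsWithin t₀ (Iio t₀) ≤ nhdsWithin t₀ {t₀}ᶜ :=
        nhdsWithin_mono _ (fun s hs => ne_of_lt hs)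
      have htend' := htend.mono_left hmono
      have hge : 0 ≤ wt x₀ t₀ - ε * K := by
        apply ge_of_tendsto htend'
        filter_upwards [Ioo_mem_nhdsLT_of_mem (⟨ht₀pos, le_rfl⟩ : t₀ ∈ Ioc 0 t₀)] with s hs
        rw [slope_def_field]
        apply div_nonneg_of_nonpos
        · have hsIcc : s ∈ Icc (0:ℝ) T := ⟨hs.1.le, le_trans hs.2.le ht₀Icc.2⟩
          have := hglobal x₀ s hsIcc
          simp only [hu] at this
          linarith
        · linarith [hs.2]
      linarith
    -- first space derivative
    have hFd : ∀ z : ℝ, HasDerivAt (fun x => w x t₀ - ε * psifun x)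
        (wx z t₀ - ε * psid z) z :=
      fun z => (hwx z t₀ ht₀Ioc).sub ((hasDerivAt_psifun z).const_mul ε)
    have hloc : IsLocalMax (fun x => w x t₀ - ε * psifun x) x₀ := by
      apply Filter.Eventually.of_forall
      intro x
      have := hglobal x t₀ ht₀Icc
      simp only [hu] at this
      simp only []
      linarith
    have hwxval : wx x₀ t₀ = ε * psid x₀ := by
      have := hloc.hasDerivAt_eq_zero (hFd x₀)
      linarith
    -- second space derivative
    have hxx : wxx x₀ t₀ ≤ ε * psidd x₀ := by
      by_contra hcon2
      push_neg at hcon2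
      set G : ℝ → ℝ := fun z => wx z t₀ - ε * psid z with hG
      set d : ℝ := wxx x₀ t₀ - ε * psidd x₀ with hd
      have hdpos : 0 < d := by simp only [hd]; linarith
      have hGd : HasDerivAt G d x₀ :=
        (hwxx x₀ t₀ ht₀Ioc).sub ((hasDerivAt_psid x₀).const_mul ε)
      have hG0 : G x₀ = 0 := by simp only [hG]; linarith
      have htend := hasDerivAt_iff_tendsto_slope.1 hGd
      have hmono : nhdsWithin x₀ (Ioi x₀) ≤ nhdsWithin x₀ {x₀}ᶜ :=
        nhdsWithin_mono _ (fun s hs => ne_of_gt hs)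
      have htend' := htend.mono_left hmono
      have hev : ∀ᶠ z in nhdsWithin x₀ (Ioi x₀), 0 < G z := by
        have hpos : ∀ᶠ u in nhds d, 0 < u := eventually_gt_nhds hdpos
        filter_upwards [htend'.eventually hpos, self_mem_nhdsWithin] with z hz hz'
        rw [slope_def_field, hG0, sub_zero] at hz
        have hzx : 0 < z - x₀ := sub_pos.mpr hz'
        have h2 : 0 < G z / (z - x₀) * (z - x₀) := mul_pos hz hzx
        rwa [div_mul_cancel₀ _ hzx.ne'] at h2
      rcases mem_nhdsGT_iff_exists_Ioo_subset.1 hev with ⟨m, hm, hIoo⟩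
      set z₁ : ℝ := (x₀ + m) / 2 with hz₁
      have hx₀m : x₀ < m := mem_Ioi.mp hm
      have hz₁m : z₁ ∈ Ioo x₀ m := by
        constructor
        · show x₀ < (x₀ + m) / 2; linarith
        · show (x₀ + m) / 2 < m; linarith
      have hmono2 : StrictMonoOn (fun x => w x t₀ - ε * psifun x) (Icc x₀ z₁) := by
        apply strictMonoOn_of_deriv_pos (convex_Icc _ _)
        · intro z _
          exact ((hFd z).differentiableAt).continuousAt.continuousWithinAt
        · intro z hz
          rw [interior_Icc] at hz
          rw [(hFd z).deriv]
          have hzIoo : z ∈ Ioo x₀ m := ⟨hz.1, lt_trans hz.2 hz₁m.2⟩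
          exact hIoo hzIoo
      have hlt : (fun x => w x t₀ - ε * psifun x) x₀ <
          (fun x => w x t₀ - ε * psifun x) z₁ := by
        apply hmono2 ⟨le_rfl, hz₁m.1.le⟩ ⟨hz₁m.1.le, le_rfl⟩ hz₁m.1
      have := hglobal z₁ t₀ ht₀Icc
      simp only [hu] at this
      simp only [] at hlt
      linarith
    -- nonlocal term
    have hwint := hint x₀ t₀ ht₀Ioc
    set Ψ : ℝ → ℝ := fun y => psifun (x₀ + y) - psifun x₀ -
      if |y| ≤ 1 then y * psid x₀ else 0 with hΨ
    have hΨbound : ∀ y : ℝ, ‖Ψ y‖ ≤ if |y| ≤ 1 then 1 * y ^ 2 else 1 * |y| := by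
      intro y
      rw [Real.norm_eq_abs]
      by_cases hy : |y| ≤ 1
      · simp only [hΨ, if_pos hy, one_mul]
        rw [abs_le]
        constructor
        · have := psifun_taylor_nonneg x₀ y
          nlinarith [sq_nonneg y]
        · exact psifun_taylor_le x₀ y
      · simp only [hΨ, if_neg hy, one_mul, sub_zero]
        exact psifun_lip x₀ y
    have hΨmeas : AEStronglyMeasurable Ψ ν := by
      have := integrand_aesm ν (fun y => psifun (x₀ + y) - psifun x₀)
        ((continuous_psifun.comp (continuous_const.add continuous_id)).sub continuous_const)
        (psid x₀)
      exact this
    have hΨint : Integrable Ψ ν := hD.mono' hΨmeas (ae_of_all _ hΨbound)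
    have hΨC₀ : ∫ y, Ψ y ∂ν ≤ C₀ := by
      rw [hC₀def]
      apply integral_mono hΨint hD
      intro y
      exact le_trans (le_abs_self _) (hΨbound y)
    have hptw : ∀ y : ℝ, (w (x₀ + y) t₀ - w x₀ t₀ -
        if |y| ≤ 1 then y * wx x₀ t₀ else 0) ≤ ε * Ψ y := by
      intro y
      have hg := hglobal (x₀ + y) t₀ ht₀Icc
      simp only [hu] at hg
      by_cases hy : |y| ≤ 1
      · simp only [if_pos hy, hΨ, hwxval]
        nlinarith [hg]
      · simp only [if_neg hy, hΨ]
        nlinarith [hg]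
    have hIle : (∫ y, (w (x₀ + y) t₀ - w x₀ t₀ -
        if |y| ≤ 1 then y * wx x₀ t₀ else 0) ∂ν) ≤ ε * C₀ := by
      calc (∫ y, (w (x₀ + y) t₀ - w x₀ t₀ - if |y| ≤ 1 then y * wx x₀ t₀ else 0) ∂ν)
          ≤ ∫ y, ε * Ψ y ∂ν := integral_mono hwint (hΨint.const_mul ε) hptw
        _ = ε * ∫ y, Ψ y ∂ν := integral_const_mul ε Ψ
        _ ≤ ε * C₀ := mul_le_mul_of_nonneg_left hΨC₀ hε.le
    -- combine
    have hIneq := hineq x₀ t₀ ht₀Ioc hw₀pos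
    have ha' : 0 < a x₀ t₀ := ha_pos x₀ t₀ ht₀Icc
    have haM : a x₀ t₀ ≤ Ma := le_of_abs_le (ha_bd x₀ t₀ ht₀Icc)
    have haw : a x₀ t₀ * wxx x₀ t₀ ≤ Ma * ε := by
      calc a x₀ t₀ * wxx x₀ t₀ ≤ a x₀ t₀ * (ε * psidd x₀) :=
            mul_le_mul_of_nonneg_left hxx ha'.le
        _ ≤ Ma * (ε * psidd x₀) := mul_le_mul_of_nonneg_right haM
            (mul_nonneg hε.le (psidd_nonneg x₀))
        _ ≤ Ma * (ε * 1) := mul_le_mul_of_nonneg_left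
            (mul_le_mul_of_nonneg_left (psidd_le_one x₀) hε.le) hMa0
        _ = Ma * ε := by ring
    have hbw : b x₀ t₀ * wx x₀ t₀ ≤ Mb * ε := by
      rw [hwxval]
      calc b x₀ t₀ * (ε * psid x₀) ≤ |b x₀ t₀ * (ε * psid x₀)| := le_abs_self _
        _ = |b x₀ t₀| * (ε * |psid x₀|) := by
            rw [abs_mul, abs_mul, abs_of_pos hε]
        _ ≤ Mb * (ε * 1) := by
            apply mul_le_mul (hb_bd x₀ t₀ ht₀Icc)
            · exact mul_le_mul_of_nonneg_left (abs_psid_le_one x₀) hε.le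
            · positivity
            · exact hMb0
        _ = Mb * ε := by ring
    have hfinal : ε * K ≤ Ma * ε + Mb * ε + ε * C₀ := by
      calc ε * K ≤ wt x₀ t₀ := htime
        _ ≤ a x₀ t₀ * wxx x₀ t₀ + b x₀ t₀ * wx x₀ t₀ +
            ∫ y, (w (x₀ + y) t₀ - w x₀ t₀ - if |y| ≤ 1 then y * wx x₀ t₀ else 0) ∂ν := hIneq
        _ ≤ Ma * ε + Mb * ε + ε * C₀ := by linarith only [haw, hbw, hIle]
    rw [hKdef] at hfinal
    linarith only [hfinal, hε]
  -- conclude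
  intro x t ht
  by_contra hpos
  push_neg at hpos
  have hden : 0 < psifun x + K * t := by
    nlinarith [one_le_psifun x, mul_nonneg hK.le ht.1]
  set ε : ℝ := w x t / (2 * (psifun x + K * t)) with hε'
  have hεpos : 0 < ε := by
    apply div_pos hpos
    linarith
  have hcl := hmain ε hεpos x t ht
  have : ε * (psifun x + K * t) = w x t / 2 := by
    rw [hε']
    field_simp
  rw [this] at hcl
  linarith
set_option maxHeartbeats 1000000 in
lemma one_sided
    (T : ℝ) (hT : 0 < T)
    (a b r : ℝ → ℝ → ℝ) (Ma Mb : ℝ)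
    (ha_pos : ∀ x : ℝ, ∀ t ∈ Icc (0:ℝ) T, 0 < a x t)
    (ha_bd : ∀ x : ℝ, ∀ t ∈ Icc (0:ℝ) T, |a x t| ≤ Ma)
    (hb_bd : ∀ x : ℝ, ∀ t ∈ Icc (0:ℝ) T, |b x t| ≤ Mb)
    (hr_nonneg : ∀ x : ℝ, ∀ t ∈ Icc (0:ℝ) T, 0 ≤ r x t)
    (ν : Measure ℝ)
    (h1 : IntegrableOn (fun y => y ^ 2) {y : ℝ | |y| ≤ 1} ν)
    (h2 : IntegrableOn (fun y => |y|) {y : ℝ | 1 < |y|} ν)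
    (p : ℝ → ℝ) (hp : ContDiff ℝ 1 p) (hp' : ∀ y : ℝ, 0 ≤ deriv p y)
    (g : ℝ → ℝ)
    (v₁ v₂ v₁t v₁x v₁xx v₂t v₂x v₂xx : ℝ → ℝ → ℝ)
    (hc₁ : ContinuousOn (fun q : ℝ × ℝ => v₁ q.1 q.2) (univ ×ˢ Icc 0 T))
    (hc₂ : ContinuousOn (fun q : ℝ × ℝ => v₂ q.1 q.2) (univ ×ˢ Icc 0 T))
    (M₁ : ℝ) (hbd₁ : ∀ x : ℝ, ∀ t ∈ Icc (0:ℝ) T, |v₁ x t| ≤ M₁)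
    (M₂ : ℝ) (hbd₂ : ∀ x : ℝ, ∀ t ∈ Icc (0:ℝ) T, |v₂ x t| ≤ M₂)
    (hv₁t : ∀ x : ℝ, ∀ t ∈ Ioc (0:ℝ) T, HasDerivAt (fun s => v₁ x s) (v₁t x t) t)
    (hv₁x : ∀ x : ℝ, ∀ t ∈ Ioc (0:ℝ) T, HasDerivAt (fun z => v₁ z t) (v₁x x t) x)
    (hv₁xx : ∀ x : ℝ, ∀ t ∈ Ioc (0:ℝ) T, HasDerivAt (fun z => v₁x z t) (v₁xx x t) x)
    (hv₂t : ∀ x : ℝ, ∀ t ∈ Ioc (0:ℝ) T, HasDerivAt (fun s => v₂ x s) (v₂t x t) t)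
    (hv₂x : ∀ x : ℝ, ∀ t ∈ Ioc (0:ℝ) T, HasDerivAt (fun z => v₂ z t) (v₂x x t) x)
    (hv₂xx : ∀ x : ℝ, ∀ t ∈ Ioc (0:ℝ) T, HasDerivAt (fun z => v₂x z t) (v₂xx x t) x)
    (heq₁ : ∀ x : ℝ, ∀ t ∈ Ioc (0:ℝ) T,
      v₁t x t - a x t * v₁xx x t - b x t * v₁x x t -
        (∫ y, (v₁ (x + y) t - v₁ x t - (if |y| ≤ 1 then y * v₁x x t else 0)) ∂ν) +
        r x t * v₁ x t + p (v₁ x t - g x) = 0)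
    (heq₂ : ∀ x : ℝ, ∀ t ∈ Ioc (0:ℝ) T,
      v₂t x t - a x t * v₂xx x t - b x t * v₂x x t -
        (∫ y, (v₂ (x + y) t - v₂ x t - (if |y| ≤ 1 then y * v₂x x t else 0)) ∂ν) +
        r x t * v₂ x t + p (v₂ x t - g x) = 0)
    (h0 : ∀ x : ℝ, v₁ x 0 = v₂ x 0) :
    ∀ x : ℝ, ∀ t ∈ Icc (0:ℝ) T, v₁ x t ≤ v₂ x t := by
  have hpmono : Monotone p :=
    monotone_of_deriv_nonneg (hp.differentiable one_ne_zero) hp'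
  have hI₁ : ∀ x : ℝ, ∀ t ∈ Ioc (0:ℝ) T, Integrable
      (fun y => v₁ (x + y) t - v₁ x t - if |y| ≤ 1 then y * v₁x x t else 0) ν :=
    fun x t ht => integrand_integrable T ν h1 h2 v₁ v₁x v₁xx M₁ hbd₁ hv₁x hv₁xx x t ht
  have hI₂ : ∀ x : ℝ, ∀ t ∈ Ioc (0:ℝ) T, Integrable
      (fun y => v₂ (x + y) t - v₂ x t - if |y| ≤ 1 then y * v₂x x t else 0) ν :=
    fun x t ht => integrand_integrable T ν h1 h2 v₂ v₂x v₂xx M₂ hbd₂ hv₂x hv₂xx x t ht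
  have hdifeq : ∀ x t : ℝ, ∀ y : ℝ,
      ((v₁ (x + y) t - v₁ x t - if |y| ≤ 1 then y * v₁x x t else 0) -
        (v₂ (x + y) t - v₂ x t - if |y| ≤ 1 then y * v₂x x t else 0)) =
      ((v₁ (x + y) t - v₂ (x + y) t) - (v₁ x t - v₂ x t) -
        if |y| ≤ 1 then y * (v₁x x t - v₂x x t) else 0) := by
    intro x t y
    by_cases hy : |y| ≤ 1 <;> simp only [if_pos, if_neg, hy, if_true, if_false] <;> ring
  have hIw : ∀ x : ℝ, ∀ t ∈ Ioc (0:ℝ) T, Integrable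
      (fun y => (v₁ (x + y) t - v₂ (x + y) t) - (v₁ x t - v₂ x t) -
        if |y| ≤ 1 then y * (v₁x x t - v₂x x t) else 0) ν := by
    intro x t ht
    exact ((hI₁ x t ht).sub (hI₂ x t ht)).congr (ae_of_all _ (fun y => hdifeq x t y))
  have hIsub : ∀ x : ℝ, ∀ t ∈ Ioc (0:ℝ) T,
      (∫ y, (v₁ (x + y) t - v₁ x t - if |y| ≤ 1 then y * v₁x x t else 0) ∂ν) -
      (∫ y, (v₂ (x + y) t - v₂ x t - if |y| ≤ 1 then y * v₂x x t else 0) ∂ν) =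
      ∫ y, ((v₁ (x + y) t - v₂ (x + y) t) - (v₁ x t - v₂ x t) -
        if |y| ≤ 1 then y * (v₁x x t - v₂x x t) else 0) ∂ν := by
    intro x t ht
    rw [← integral_sub (hI₁ x t ht) (hI₂ x t ht)]
    exact integral_congr_ae (ae_of_all _ (fun y => hdifeq x t y))
  have key := maxprin T hT a b Ma Mb ha_pos ha_bd hb_bd ν h1 h2
    (fun x t => v₁ x t - v₂ x t) (fun x t => v₁t x t - v₂t x t)
    (fun x t => v₁x x t - v₂x x t) (fun x t => v₁xx x t - v₂xx x t)
    (hc₁.sub hc₂) (M₁ + M₂)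
    (fun x t ht => by
      show v₁ x t - v₂ x t ≤ M₁ + M₂
      have h1' := abs_le.1 (hbd₁ x t ht)
      have h2' := abs_le.1 (hbd₂ x t ht)
      linarith [h1'.2, h2'.1])
    (fun x => by show v₁ x 0 - v₂ x 0 ≤ 0; rw [h0 x]; simp)
    (fun x t ht => (hv₁t x t ht).sub (hv₂t x t ht))
    (fun x t ht => (hv₁x x t ht).sub (hv₂x x t ht))
    (fun x t ht => (hv₁xx x t ht).sub (hv₂xx x t ht))
    (fun x t ht => hIw x t ht)
    (fun x t ht hw => by
      show v₁t x t - v₂t x t ≤ a x t * (v₁xx x t - v₂xx x t) +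
        b x t * (v₁x x t - v₂x x t) +
        ∫ y, ((v₁ (x + y) t - v₂ (x + y) t) - (v₁ x t - v₂ x t) -
          if |y| ≤ 1 then y * (v₁x x t - v₂x x t) else 0) ∂ν
      have hw' : 0 < v₁ x t - v₂ x t := hw
      have H1 := heq₁ x t ht
      have H2 := heq₂ x t ht
      have hsub := hIsub x t ht
      have hda : a x t * (v₁xx x t - v₂xx x t) =
          a x t * v₁xx x t - a x t * v₂xx x t := by ring
      have hdb : b x t * (v₁x x t - v₂x x t) =
          b x t * v₁x x t - b x t * v₂x x t := by ring
      have hrw : 0 ≤ r x t * (v₁ x t - v₂ x t) :=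
        mul_nonneg (hr_nonneg x t (Ioc_subset_Icc_self ht)) (le_of_lt hw')
      have hdr : r x t * (v₁ x t - v₂ x t) =
          r x t * v₁ x t - r x t * v₂ x t := by ring
      have hpm : p (v₂ x t - g x) ≤ p (v₁ x t - g x) := hpmono (by linarith)
      linarith only [H1, H2, hsub, hda, hdb, hrw, hdr, hpm])
  intro x t ht
  have hk : v₁ x t - v₂ x t ≤ 0 := key x t ht
  linarith
theorem stmt_15
    (T : ℝ) (hT : 0 < T)
    (a b r : ℝ → ℝ → ℝ) (Ma Mb Mr : ℝ)
    (ha_pos : ∀ x : ℝ, ∀ t ∈ Icc (0:ℝ) T, 0 < a x t)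
    (ha_bd : ∀ x : ℝ, ∀ t ∈ Icc (0:ℝ) T, |a x t| ≤ Ma)
    (hb_bd : ∀ x : ℝ, ∀ t ∈ Icc (0:ℝ) T, |b x t| ≤ Mb)
    (hr_nonneg : ∀ x : ℝ, ∀ t ∈ Icc (0:ℝ) T, 0 ≤ r x t)
    (hr_bd : ∀ x : ℝ, ∀ t ∈ Icc (0:ℝ) T, r x t ≤ Mr)
    (ν : Measure ℝ)
    (h1 : IntegrableOn (fun y => y ^ 2) {y : ℝ | |y| ≤ 1} ν)
    (h2 : IntegrableOn (fun y => |y|) {y : ℝ | 1 < |y|} ν)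
    (p : ℝ → ℝ) (hp : ContDiff ℝ 1 p) (hp' : ∀ y : ℝ, 0 ≤ deriv p y)
    (g : ℝ → ℝ)
    (v₁ v₂ v₁t v₁x v₁xx v₂t v₂x v₂xx : ℝ → ℝ → ℝ)
    (hc₁ : ContinuousOn (fun q : ℝ × ℝ => v₁ q.1 q.2) (univ ×ˢ Icc 0 T))
    (hc₂ : ContinuousOn (fun q : ℝ × ℝ => v₂ q.1 q.2) (univ ×ˢ Icc 0 T))
    (M₁ : ℝ) (hbd₁ : ∀ x : ℝ, ∀ t ∈ Icc (0:ℝ) T, |v₁ x t| ≤ M₁)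
    (M₂ : ℝ) (hbd₂ : ∀ x : ℝ, ∀ t ∈ Icc (0:ℝ) T, |v₂ x t| ≤ M₂)
    (hv₁t : ∀ x : ℝ, ∀ t ∈ Ioc (0:ℝ) T, HasDerivAt (fun s => v₁ x s) (v₁t x t) t)
    (hv₁x : ∀ x : ℝ, ∀ t ∈ Ioc (0:ℝ) T, HasDerivAt (fun z => v₁ z t) (v₁x x t) x)
    (hv₁xx : ∀ x : ℝ, ∀ t ∈ Ioc (0:ℝ) T, HasDerivAt (fun z => v₁x z t) (v₁xx x t) x)
    (hv₂t : ∀ x : ℝ, ∀ t ∈ Ioc (0:ℝ) T, HasDerivAt (fun s => v₂ x s) (v₂t x t) t)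
    (hv₂x : ∀ x : ℝ, ∀ t ∈ Ioc (0:ℝ) T, HasDerivAt (fun z => v₂ z t) (v₂x x t) x)
    (hv₂xx : ∀ x : ℝ, ∀ t ∈ Ioc (0:ℝ) T, HasDerivAt (fun z => v₂x z t) (v₂xx x t) x)
    (heq₁ : ∀ x : ℝ, ∀ t ∈ Ioc (0:ℝ) T,
      v₁t x t - a x t * v₁xx x t - b x t * v₁x x t -
        (∫ y, (v₁ (x + y) t - v₁ x t - (if |y| ≤ 1 then y * v₁x x t else 0)) ∂ν) +
        r x t * v₁ x t + p (v₁ x t - g x) = 0)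
    (heq₂ : ∀ x : ℝ, ∀ t ∈ Ioc (0:ℝ) T,
      v₂t x t - a x t * v₂xx x t - b x t * v₂x x t -
        (∫ y, (v₂ (x + y) t - v₂ x t - (if |y| ≤ 1 then y * v₂x x t else 0)) ∂ν) +
        r x t * v₂ x t + p (v₂ x t - g x) = 0)
    (h0 : ∀ x : ℝ, v₁ x 0 = v₂ x 0) :
    ∀ x : ℝ, ∀ t ∈ Icc (0:ℝ) T, v₁ x t = v₂ x t := by
  intro x t ht
  have hle := one_sided T hT a b r Ma Mb ha_pos ha_bd hb_bd hr_nonneg ν h1 h2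
    p hp hp' g v₁ v₂ v₁t v₁x v₁xx v₂t v₂x v₂xx hc₁ hc₂ M₁ hbd₁ M₂ hbd₂
    hv₁t hv₁x hv₁xx hv₂t hv₂x hv₂xx heq₁ heq₂ h0 x t ht
  have hge := one_sided T hT a b r Ma Mb ha_pos ha_bd hb_bd hr_nonneg ν h1 h2
    p hp hp' g v₂ v₁ v₂t v₂x v₂xx v₁t v₁x v₁xx hc₂ hc₁ M₂ hbd₂ M₁ hbd₁
    hv₂t hv₂x hv₂xx hv₁t hv₁x hv₁xx heq₂ heq₁ (fun x => (h0 x).symm) x t ht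
  linarith
end
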